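/- arXiv:2312.11769 — 6 statements merged into one kernel-verified Lean document; each statement's English description precedes it below -/
import Mathlib

section
/- Let S be a finite set of points in ℝ^d that is (C,ε)-stable with respect to μ ∈ ℝ^d and σ > 0, for some C ≥ 1 and 0 < ε ≤ 0.04, and let 0 < α ≤ 1. Then any subset S' ⊆ S with |S'| ≥ α·|S| is (1.23·C/√(0.04·α), 0.04)-stable with respect to μ and σ. -/
open scoped BigOperators

noncomputable instance euclDecEq (d : ℕ) : DecidableEq (EuclideanSpace ℝ (Fin d)) :=
  Classical.decEq _

/-- The operator (spectral) norm of a `d × d` real matrix, viewed as a linear map on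
Euclidean space. -/
noncomputable def opNorm {d : ℕ} (M : Matrix (Fin d) (Fin d) ℝ) : ℝ :=
  ‖LinearMap.toContinuousLinearMap (Matrix.toEuclideanLin M)‖

/-- The outer product `u uᵀ` as a matrix. -/
noncomputable def outerMat {d : ℕ} (u : EuclideanSpace ℝ (Fin d)) : Matrix (Fin d) (Fin d) ℝ :=
  Matrix.of fun a b => u a * u b

/-- The mean of a finite set of points in `ℝ^d`. -/
noncomputable def fmean {d : ℕ} (S : Finset (EuclideanSpace ℝ (Fin d))) :
    EuclideanSpace ℝ (Fin d) :=
  (S.card : ℝ)⁻¹ • ∑ x ∈ S, x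

/-- The covariance matrix of a finite set of points in `ℝ^d`. -/
noncomputable def fcov {d : ℕ} (S : Finset (EuclideanSpace ℝ (Fin d))) :
    Matrix (Fin d) (Fin d) ℝ :=
  (S.card : ℝ)⁻¹ • ∑ x ∈ S, outerMat (x - fmean S)

/-- `σ_S`, the square root of the largest eigenvalue of the covariance matrix of `S`. -/
noncomputable def fstdev {d : ℕ} (S : Finset (EuclideanSpace ℝ (Fin d))) : ℝ :=
  Real.sqrt (opNorm (fcov S))


/-- `(C, ε)`-stability of a finite set of points with respect to `μ` and `σ`. -/
def IsStable {d : ℕ} (S : Finset (EuclideanSpace ℝ (Fin d))) (C ε : ℝ)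
    (μ : EuclideanSpace ℝ (Fin d)) (σ : ℝ) : Prop :=
  ∀ w : EuclideanSpace ℝ (Fin d) → ℝ,
    (∀ x ∈ S, 0 ≤ w x ∧ w x ≤ 1) →
    (1 - ε) * (S.card : ℝ) ≤ ∑ x ∈ S, w x →
    ‖(∑ x ∈ S, w x)⁻¹ • (∑ x ∈ S, w x • x) - μ‖ ≤ C * σ * Real.sqrt ε ∧
    ((C ^ 2 * σ ^ 2) • (1 : Matrix (Fin d) (Fin d) ℝ) -
        (∑ x ∈ S, w x)⁻¹ • ∑ x ∈ S, w x • outerMat (x - μ)).PosSemidef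


section aux
open Matrix
open scoped RealInnerProductSpace

lemma sum_mulVec' {d : ℕ} {ι : Type*} (s : Finset ι) (A : ι → Matrix (Fin d) (Fin d) ℝ)
    (v : Fin d → ℝ) : (∑ x ∈ s, A x) *ᵥ v = ∑ x ∈ s, (A x *ᵥ v) := by
  funext i
  simp only [Matrix.mulVec, dotProduct, Matrix.sum_apply, Finset.sum_apply,
    Finset.sum_mul]
  rw [Finset.sum_comm]

lemma dotProduct_finsum {d : ℕ} {ι : Type*} (v : Fin d → ℝ) (s : Finset ι)
    (f : ι → Fin d → ℝ) : v ⬝ᵥ (∑ x ∈ s, f x) = ∑ x ∈ s, v ⬝ᵥ f x := by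
  simp only [dotProduct, Finset.sum_apply, Finset.mul_sum]
  rw [Finset.sum_comm]

lemma outer_quad {d : ℕ} (u : EuclideanSpace ℝ (Fin d)) (v : Fin d → ℝ) :
    v ⬝ᵥ (outerMat u *ᵥ v) = (∑ i, u i * v i) ^ 2 := by
  simp only [dotProduct, Matrix.mulVec, outerMat, Matrix.of_apply]
  rw [sq, Finset.sum_mul]
  simp only [Finset.mul_sum, Finset.sum_mul]
  apply Finset.sum_congr rfl; intro i _
  apply Finset.sum_congr rfl; intro j _
  ring

lemma quad_eval {d : ℕ} (a c : ℝ) (T : Finset (EuclideanSpace ℝ (Fin d)))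
    (w : EuclideanSpace ℝ (Fin d) → ℝ) (μ : EuclideanSpace ℝ (Fin d)) (v : Fin d → ℝ) :
    v ⬝ᵥ ((a • (1 : Matrix (Fin d) (Fin d) ℝ) - c • ∑ x ∈ T, w x • outerMat (x - μ)) *ᵥ v)
      = a * (∑ i, v i ^ 2) - c * ∑ x ∈ T, w x * (∑ i, (x - μ) i * v i) ^ 2 := by
  rw [Matrix.sub_mulVec, dotProduct_sub, Matrix.smul_mulVec,
    Matrix.smul_mulVec, sum_mulVec', dotProduct_smul, dotProduct_smul,
    Matrix.one_mulVec, dotProduct_finsum]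
  congr 1
  · simp [dotProduct, sq, smul_eq_mul]
  · rw [smul_eq_mul]
    congr 1
    apply Finset.sum_congr rfl
    intro x _
    rw [Matrix.smul_mulVec, dotProduct_smul, outer_quad]
    rfl

lemma herm_aux {d : ℕ} (a c : ℝ) (T : Finset (EuclideanSpace ℝ (Fin d)))
    (w : EuclideanSpace ℝ (Fin d) → ℝ) (μ : EuclideanSpace ℝ (Fin d)) :
    (a • (1 : Matrix (Fin d) (Fin d) ℝ) - c • ∑ x ∈ T, w x • outerMat (x - μ)).IsHermitian := by
  show _ = _
  ext i j
  simp only [Matrix.conjTranspose_apply, Matrix.sub_apply, Matrix.smul_apply, Matrix.one_apply,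
    Matrix.sum_apply, outerMat, Matrix.of_apply, smul_eq_mul, star_trivial]
  congr 1
  · simp [eq_comm]
  · congr 1
    apply Finset.sum_congr rfl
    intro x _
    ring

lemma euclid_inner_eq {d : ℕ} (a b : EuclideanSpace ℝ (Fin d)) :
    ⟪a, b⟫ = ∑ i, a i * b i := by
  simp [PiLp.inner_apply, RCLike.inner_apply, conj_trivial]
  exact Finset.sum_congr rfl fun i _ => mul_comm _ _

end aux


section main
open Matrix
open scoped RealInnerProductSpace

set_option maxHeartbeats 1000000 in
/-- Lemma: stability of subsets.
If `S` is `(C, ε)`-stable w.r.t. `μ` and `σ > 0` with `C ≥ 1` and `0 < ε ≤ 0.04`, then any subset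
`S' ⊆ S` with `|S'| ≥ α |S|` is `(1.23 C / √(0.04 α), 0.04)`-stable w.r.t. `μ` and `σ`. -/
theorem stability_of_subsets {d : ℕ} (S : Finset (EuclideanSpace ℝ (Fin d)))
    (C ε α σ : ℝ) (μ : EuclideanSpace ℝ (Fin d))
    (hC : 1 ≤ C) (hε0 : 0 < ε) (hε : ε ≤ 0.04) (hσ : 0 < σ)
    (hα0 : 0 < α) (hα1 : α ≤ 1)
    (hstab : IsStable S C ε μ σ) :
    ∀ S' ⊆ S, α * (S.card : ℝ) ≤ (S'.card : ℝ) →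
      IsStable S' (1.23 * C / Real.sqrt (0.04 * α)) 0.04 μ σ := by
  intro S' hsub hcard w hw hwsum
  have hC0 : (0:ℝ) < C := lt_of_lt_of_le one_pos hC
  have hs04 : Real.sqrt (0.04 : ℝ) = 0.2 := by
    rw [show (0.04:ℝ) = 0.2 ^ 2 by norm_num, Real.sqrt_sq (by norm_num)]
  have hsα : (Real.sqrt (0.04 * α)) ^ 2 = 0.04 * α := Real.sq_sqrt (by positivity)
  have hsαpos : 0 < Real.sqrt (0.04 * α) := Real.sqrt_pos.mpr (by positivity)
  set B : ℝ := 1.23 * C / Real.sqrt (0.04 * α) with hB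
  have hBpos : 0 < B := by positivity
  have hB2 : B ^ 2 * (0.04 * α) = 1.5129 * C ^ 2 := by
    rw [hB, div_pow, hsα, div_mul_cancel₀ _ (by positivity : (0.04 * α : ℝ) ≠ 0)]
    ring
  clear_value B
  set W : ℝ := ∑ x ∈ S', w x with hW
  clear_value W
  -- stability applied to the all-ones weights
  have hone := hstab (fun _ => (1:ℝ)) (fun x _ => ⟨zero_le_one, le_rfl⟩)
    (by
      simp only [Finset.sum_const, nsmul_eq_mul, mul_one]
      nlinarith [Nat.cast_nonneg (α := ℝ) S.card])
  simp only [Finset.sum_const, nsmul_eq_mul, mul_one] at hone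
  by_cases hS' : S' = ∅
  · -- degenerate case: S' = ∅, hence S = ∅
    have hScard : S.card = 0 := by
      subst hS'
      simp only [Finset.card_empty, Nat.cast_zero] at hcard
      by_contra h
      have h1 : (1:ℝ) ≤ (S.card:ℝ) := by exact_mod_cast Nat.one_le_iff_ne_zero.mpr h
      nlinarith
    have hS : S = ∅ := Finset.card_eq_zero.mp hScard
    subst hS'
    subst hS
    simp only [Finset.sum_empty, Finset.card_empty, Nat.cast_zero] at hone ⊢
    constructor
    · have h1 := hone.1
      simp only [smul_zero] at h1 ⊢
      have hsε : Real.sqrt ε ≤ 0.2 := by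
        rw [← hs04]; exact Real.sqrt_le_sqrt hε
      have hsε0 : 0 ≤ Real.sqrt ε := Real.sqrt_nonneg _
      have hsub2 : Real.sqrt (0.04 * α) ≤ 0.2 := by
        rw [← hs04]
        exact Real.sqrt_le_sqrt (by nlinarith)
      have hBlb : 1.23 * C ≤ B * 0.2 := by
        rw [hB]
        rw [div_mul_eq_mul_div, le_div_iff₀ hsαpos]
        nlinarith
      refine le_trans h1 ?_
      rw [hs04]
      have k1 : C * σ * Real.sqrt ε ≤ C * σ * 0.2 :=
        mul_le_mul_of_nonneg_left hsε (by positivity)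
      have k2 : C ≤ B := by linarith only [hBlb, hC0]
      have k3 : C * σ ≤ B * σ := mul_le_mul_of_nonneg_right k2 hσ.le
      linarith only [k1, k3]
    · have hps : ∀ a : ℝ, 0 ≤ a → (a • (1 : Matrix (Fin d) (Fin d) ℝ)).PosSemidef := by
        intro a ha
        apply Matrix.PosSemidef.of_dotProduct_mulVec_nonneg
        · show _ = _
          rw [Matrix.conjTranspose_smul, Matrix.conjTranspose_one, star_trivial]
        · intro v
          rw [show star v = v from star_trivial v, Matrix.smul_mulVec,
            Matrix.one_mulVec, dotProduct_smul, smul_eq_mul]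
          have hvv : 0 ≤ v ⬝ᵥ v := by
            simp only [dotProduct]
            exact Finset.sum_nonneg fun i _ => mul_self_nonneg _
          positivity
      have hgoal := hps (B ^ 2 * σ ^ 2) (by positivity)
      simpa using hgoal
  -- main case
  have hn1 : (1:ℝ) ≤ (S'.card:ℝ) := by
    exact_mod_cast Nat.one_le_iff_ne_zero.mpr
      (Finset.card_ne_zero_of_mem (Finset.nonempty_iff_ne_empty.mpr hS').choose_spec)
  have hmn : (S'.card:ℝ) ≤ (S.card:ℝ) := by exact_mod_cast Finset.card_le_card hsub
  have hm1 : (1:ℝ) ≤ (S.card:ℝ) := le_trans hn1 hmn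
  have hWlb : 0.96 * (S'.card:ℝ) ≤ W := by
    have : (1:ℝ) - 0.04 = 0.96 := by norm_num
    rw [hW]; linarith [hwsum]
  have hWpos : (0:ℝ) < W := by nlinarith
  -- key numeric inequality
  have KI2 : (S.card:ℝ) * C ^ 2 ≤ 0.04 * B ^ 2 * W := by
    have h1 : C ^ 2 * (α * (S.card:ℝ)) ≤ C ^ 2 * (S'.card:ℝ) :=
      mul_le_mul_of_nonneg_left hcard (sq_nonneg C)
    have h2 : 0.96 * (C ^ 2 * (S'.card:ℝ)) ≤ C ^ 2 * W := by nlinarith [sq_nonneg C]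
    have h3 : (S.card:ℝ) * C ^ 2 * α ≤ 1.5129 * C ^ 2 * W := by nlinarith [sq_nonneg C, hWpos]
    have h4 : 0.04 * B ^ 2 * W * α = 1.5129 * C ^ 2 * W := by
      rw [show 0.04 * B ^ 2 * W * α = B ^ 2 * (0.04 * α) * W by ring, hB2]
    nlinarith [h3, h4, hα0]
  -- the quadratic form bound for the full set
  have keyS : ∀ v : Fin d → ℝ,
      ∑ x ∈ S, (∑ i, (x - μ) i * v i) ^ 2 ≤ (S.card:ℝ) * (C ^ 2 * σ ^ 2 * ∑ i, v i ^ 2) := by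
    intro v
    have h2 := hone.2.dotProduct_mulVec_nonneg v
    have hq := quad_eval (C ^ 2 * σ ^ 2) ((S.card:ℝ))⁻¹ S (fun _ => (1:ℝ)) μ v
    simp only [one_smul, one_mul] at hq h2
    rw [show star v = v from star_trivial v, hq] at h2
    have hmpos : (0:ℝ) < (S.card:ℝ) := by linarith
    rw [sub_nonneg] at h2
    calc ∑ x ∈ S, (∑ i, (x - μ) i * v i) ^ 2
        = (S.card:ℝ) * ((S.card:ℝ)⁻¹ * ∑ x ∈ S, (∑ i, (x - μ) i * v i) ^ 2) := by
          field_simp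
      _ ≤ (S.card:ℝ) * (C ^ 2 * σ ^ 2 * ∑ i, v i ^ 2) := by
          apply mul_le_mul_of_nonneg_left _ hmpos.le
          exact h2
  -- a common bound on weighted sums over S'
  have hwbound : ∀ v : Fin d → ℝ,
      ∑ x ∈ S', w x * (∑ i, (x - μ) i * v i) ^ 2
        ≤ (S.card:ℝ) * (C ^ 2 * σ ^ 2 * ∑ i, v i ^ 2) := by
    intro v
    calc ∑ x ∈ S', w x * (∑ i, (x - μ) i * v i) ^ 2
        ≤ ∑ x ∈ S', (∑ i, (x - μ) i * v i) ^ 2 := by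
          apply Finset.sum_le_sum
          intro x hx
          exact mul_le_of_le_one_left (sq_nonneg _) (hw x hx).2
      _ ≤ ∑ x ∈ S, (∑ i, (x - μ) i * v i) ^ 2 :=
          Finset.sum_le_sum_of_subset_of_nonneg hsub (fun x _ _ => sq_nonneg _)
      _ ≤ _ := keyS v
  constructor
  · -- mean bound
    set z : EuclideanSpace ℝ (Fin d) := W⁻¹ • (∑ x ∈ S', w x • x) - μ with hz
    clear_value z
    show ‖z‖ ≤ B * σ * Real.sqrt 0.04
    have hz2 : z = W⁻¹ • ∑ x ∈ S', w x • (x - μ) := by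
      have hsplit : (∑ x ∈ S', w x • (x - μ)) = (∑ x ∈ S', w x • x) - W • μ := by
        simp only [smul_sub, Finset.sum_sub_distrib]
        rw [← Finset.sum_smul, ← hW]
      rw [hz, hsplit, smul_sub, smul_smul, inv_mul_cancel₀ (ne_of_gt hWpos), one_smul]
    have hzsq : (∑ i, z i ^ 2) = ‖z‖ ^ 2 := by
      rw [← real_inner_self_eq_norm_sq, euclid_inner_eq z z]
      exact Finset.sum_congr rfl fun i _ => sq (z i)
    have hnormsq : ‖z‖ ^ 2 = W⁻¹ * ∑ x ∈ S', w x * (∑ i, (x - μ) i * z i) := by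
      rw [← real_inner_self_eq_norm_sq]
      nth_rewrite 1 [hz2]
      rw [real_inner_smul_left, sum_inner]
      congr 1
      refine Finset.sum_congr rfl fun x _ => ?_
      rw [real_inner_smul_left, euclid_inner_eq]
    have hCS : (∑ x ∈ S', w x * (∑ i, (x - μ) i * z i)) ^ 2
        ≤ W * ∑ x ∈ S', w x * (∑ i, (x - μ) i * z i) ^ 2 := by
      have h := Finset.sum_mul_sq_le_sq_mul_sq S' (fun x => Real.sqrt (w x))
        (fun x => Real.sqrt (w x) * (∑ i, (x - μ) i * z i))
      have e1 : (∑ x ∈ S', Real.sqrt (w x) * (Real.sqrt (w x) * (∑ i, (x - μ) i * z i)))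
          = ∑ x ∈ S', w x * (∑ i, (x - μ) i * z i) :=
        Finset.sum_congr rfl fun x hx => by
          rw [← mul_assoc, Real.mul_self_sqrt (hw x hx).1]
      have e2 : (∑ x ∈ S', Real.sqrt (w x) ^ 2) = W :=
        hW ▸ Finset.sum_congr rfl fun x hx => Real.sq_sqrt (hw x hx).1
      have e3 : (∑ x ∈ S', (Real.sqrt (w x) * (∑ i, (x - μ) i * z i)) ^ 2)
          = ∑ x ∈ S', w x * (∑ i, (x - μ) i * z i) ^ 2 :=
        Finset.sum_congr rfl fun x hx => by
          rw [mul_pow, Real.sq_sqrt (hw x hx).1]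
      rw [e1, e2, e3] at h
      exact h
    have hb := hwbound z
    rw [hzsq] at hb
    have h1 : W * ‖z‖ ^ 2 = ∑ x ∈ S', w x * (∑ i, (x - μ) i * z i) := by
      rw [hnormsq, ← mul_assoc, mul_inv_cancel₀ (ne_of_gt hWpos), one_mul]
    have hmain : (W * ‖z‖ ^ 2) * (W * ‖z‖ ^ 2)
        ≤ W * ((S.card:ℝ) * (C ^ 2 * σ ^ 2 * ‖z‖ ^ 2)) := by
      calc (W * ‖z‖ ^ 2) * (W * ‖z‖ ^ 2)
          = (∑ x ∈ S', w x * (∑ i, (x - μ) i * z i)) ^ 2 := by rw [h1]; ring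
        _ ≤ W * ∑ x ∈ S', w x * (∑ i, (x - μ) i * z i) ^ 2 := hCS
        _ ≤ W * ((S.card:ℝ) * (C ^ 2 * σ ^ 2 * ‖z‖ ^ 2)) :=
            mul_le_mul_of_nonneg_left hb hWpos.le
    by_cases h0 : ‖z‖ = 0
    · rw [h0]
      exact mul_nonneg (mul_nonneg hBpos.le hσ.le) (Real.sqrt_nonneg _)
    · have htpos : 0 < ‖z‖ ^ 2 :=
        pow_pos ((norm_nonneg z).lt_of_ne (Ne.symm h0)) 2
      have s1 : W * ‖z‖ ^ 2 ≤ (S.card:ℝ) * (C ^ 2 * σ ^ 2) := by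
        nlinarith [hmain, mul_pos hWpos htpos]
      have s2 : (S.card:ℝ) * (C ^ 2 * σ ^ 2) ≤ 0.04 * B ^ 2 * W * σ ^ 2 := by
        nlinarith [mul_le_mul_of_nonneg_right KI2 (sq_nonneg σ)]
      have s3 : ‖z‖ ^ 2 ≤ 0.04 * B ^ 2 * σ ^ 2 := by
        nlinarith [s1, s2, hWpos]
      have h4 : ‖z‖ ^ 2 ≤ (B * σ * Real.sqrt 0.04) ^ 2 := by
        rw [hs04]
        nlinarith [s3]
      calc ‖z‖ = Real.sqrt (‖z‖ ^ 2) := (Real.sqrt_sq (norm_nonneg z)).symm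
        _ ≤ Real.sqrt ((B * σ * Real.sqrt 0.04) ^ 2) := Real.sqrt_le_sqrt h4
        _ = B * σ * Real.sqrt 0.04 := Real.sqrt_sq (mul_nonneg (mul_nonneg hBpos.le hσ.le) (Real.sqrt_nonneg _))
  · -- covariance bound
    refine Matrix.PosSemidef.of_dotProduct_mulVec_nonneg (herm_aux _ _ _ _ _) fun v => ?_
    rw [show star v = v from star_trivial v, quad_eval]
    rw [sub_nonneg]
    have hv : (0:ℝ) ≤ ∑ i, v i ^ 2 := Finset.sum_nonneg fun i _ => sq_nonneg _
    calc W⁻¹ * ∑ x ∈ S', w x * (∑ i, (x - μ) i * v i) ^ 2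
        ≤ W⁻¹ * ((S.card:ℝ) * (C ^ 2 * σ ^ 2 * ∑ i, v i ^ 2)) :=
          mul_le_mul_of_nonneg_left (hwbound v) (inv_nonneg.mpr hWpos.le)
      _ ≤ B ^ 2 * σ ^ 2 * ∑ i, v i ^ 2 := by
          rw [inv_mul_le_iff₀ hWpos]
          nlinarith [KI2, mul_nonneg (mul_nonneg (sq_nonneg σ) hv) hWpos.le,
            mul_le_mul_of_nonneg_right KI2 (mul_nonneg (sq_nonneg σ) hv)]
end main
end

section
/- For every finite set T of m ≥ 2 points in ℝ^d there exists a finite list L of at most m²·(log₂(2m²) + 1) nonnegative real numbers such that for every subset S ⊆ T containing at least two distinct points, there exists ŝ ∈ L with ‖Cov(S)‖_op ≤ ŝ² ≤ 2·‖Cov(S)‖_op. -/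
open scoped BigOperators

lemma toEuclideanLin_outerMat {d : ℕ} (u x : EuclideanSpace ℝ (Fin d)) :
    Matrix.toEuclideanLin (outerMat u) x = (inner ℝ u x : ℝ) • u := by
  ext a
  simp only [Matrix.toEuclideanLin_apply, outerMat, Matrix.mulVec, dotProduct,
    PiLp.inner_apply, RCLike.inner_apply, conj_trivial, PiLp.toLp_apply,
    PiLp.smul_apply, smul_eq_mul, Matrix.of_apply]
  rw [Finset.sum_mul]
  exact Finset.sum_congr rfl fun b _ => by ring

lemma fcov_apply' {d : ℕ} (S : Finset (EuclideanSpace ℝ (Fin d))) (x : EuclideanSpace ℝ (Fin d)) :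
    Matrix.toEuclideanLin (fcov S) x
      = (S.card : ℝ)⁻¹ • ∑ p ∈ S, ((inner ℝ (p - fmean S) x : ℝ) • (p - fmean S)) := by
  simp only [fcov, map_smul, map_sum, LinearMap.smul_apply, LinearMap.sum_apply,
    toEuclideanLin_outerMat]

lemma sub_fmean_eq {d : ℕ} (S : Finset (EuclideanSpace ℝ (Fin d))) (hS : S.Nonempty)
    (p : EuclideanSpace ℝ (Fin d)) :
    p - fmean S = (S.card : ℝ)⁻¹ • ∑ q ∈ S, (p - q) := by
  have hc : (S.card : ℝ) ≠ 0 := by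
    exact Nat.cast_ne_zero.mpr (Finset.card_pos.mpr hS).ne'
  rw [Finset.sum_sub_distrib, Finset.sum_const, smul_sub, fmean]
  congr 1
  rw [← Nat.cast_smul_eq_nsmul ℝ, smul_smul, inv_mul_cancel₀ hc, one_smul]

lemma norm_sub_fmean_le {d : ℕ} (S : Finset (EuclideanSpace ℝ (Fin d))) (hS : S.Nonempty)
    {p : EuclideanSpace ℝ (Fin d)} (hp : p ∈ S) {D : ℝ}
    (hD : ∀ q ∈ S, ‖p - q‖ ≤ D) : ‖p - fmean S‖ ≤ D := by
  have hc : (0:ℝ) < S.card := by exact_mod_cast Finset.card_pos.mpr hS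
  rw [sub_fmean_eq S hS p, norm_smul]
  have h1 : ‖∑ q ∈ S, (p - q)‖ ≤ ∑ q ∈ S, ‖p - q‖ := norm_sum_le _ _
  have h2 : ∑ q ∈ S, ‖p - q‖ ≤ S.card * D := by
    calc ∑ q ∈ S, ‖p - q‖ ≤ ∑ _q ∈ S, D := Finset.sum_le_sum fun q hq => hD q hq
    _ = S.card * D := by rw [Finset.sum_const, nsmul_eq_mul]
  have : ‖((S.card : ℝ)⁻¹ : ℝ)‖ = (S.card : ℝ)⁻¹ := by
    rw [Real.norm_eq_abs, abs_of_pos (by positivity)]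
  rw [this]
  calc (S.card : ℝ)⁻¹ * ‖∑ q ∈ S, (p - q)‖ ≤ (S.card : ℝ)⁻¹ * (S.card * D) := by
        apply mul_le_mul_of_nonneg_left (le_trans h1 h2) (by positivity)
  _ = D := by field_simp

lemma opNorm_fcov_le {d : ℕ} (S : Finset (EuclideanSpace ℝ (Fin d))) (hS : S.Nonempty)
    {D : ℝ} (hD : ∀ p ∈ S, ∀ q ∈ S, ‖p - q‖ ≤ D) : opNorm (fcov S) ≤ D ^ 2 := by
  obtain ⟨p0, hp0⟩ := hS
  have hD0 : 0 ≤ D := le_trans (by simp) (hD p0 hp0 p0 hp0)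
  have hc : (0:ℝ) < S.card := by exact_mod_cast Finset.card_pos.mpr ⟨p0, hp0⟩
  apply ContinuousLinearMap.opNorm_le_bound _ (by positivity)
  intro x
  rw [LinearMap.coe_toContinuousLinearMap', fcov_apply', norm_smul]
  have key : ∀ p ∈ S, ‖(inner ℝ (p - fmean S) x : ℝ) • (p - fmean S)‖ ≤ D ^ 2 * ‖x‖ := by
    intro p hp
    have hv : ‖p - fmean S‖ ≤ D := norm_sub_fmean_le S ⟨p0, hp0⟩ hp (fun q hq => hD p hp q hq)
    rw [norm_smul, Real.norm_eq_abs]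
    have h1 : |(inner ℝ (p - fmean S) x : ℝ)| ≤ ‖p - fmean S‖ * ‖x‖ := abs_real_inner_le_norm _ _
    calc |(inner ℝ (p - fmean S) x : ℝ)| * ‖p - fmean S‖ ≤ (‖p - fmean S‖ * ‖x‖) * ‖p - fmean S‖ := by
          apply mul_le_mul_of_nonneg_right h1 (norm_nonneg _)
    _ = ‖p - fmean S‖ ^ 2 * ‖x‖ := by ring
    _ ≤ D ^ 2 * ‖x‖ := by
          apply mul_le_mul_of_nonneg_right _ (norm_nonneg _)
          exact pow_le_pow_left₀ (norm_nonneg _) hv 2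
  have h2 : ‖∑ p ∈ S, (inner ℝ (p - fmean S) x : ℝ) • (p - fmean S)‖ ≤ S.card * (D ^ 2 * ‖x‖) := by
    calc ‖∑ p ∈ S, (inner ℝ (p - fmean S) x : ℝ) • (p - fmean S)‖
        ≤ ∑ p ∈ S, ‖(inner ℝ (p - fmean S) x : ℝ) • (p - fmean S)‖ := norm_sum_le _ _
    _ ≤ ∑ _p ∈ S, D ^ 2 * ‖x‖ := Finset.sum_le_sum key
    _ = S.card * (D ^ 2 * ‖x‖) := by rw [Finset.sum_const, nsmul_eq_mul]
  have : ‖((S.card : ℝ)⁻¹ : ℝ)‖ = (S.card : ℝ)⁻¹ := by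
    rw [Real.norm_eq_abs, abs_of_pos (by positivity)]
  rw [this]
  calc (S.card : ℝ)⁻¹ * ‖∑ p ∈ S, (inner ℝ (p - fmean S) x : ℝ) • (p - fmean S)‖
      ≤ (S.card : ℝ)⁻¹ * (S.card * (D ^ 2 * ‖x‖)) := by
        apply mul_le_mul_of_nonneg_left h2 (by positivity)
  _ = D ^ 2 * ‖x‖ := by field_simp

lemma le_opNorm_fcov {d : ℕ} (S : Finset (EuclideanSpace ℝ (Fin d)))
    {x y : EuclideanSpace ℝ (Fin d)} (hx : x ∈ S) (hy : y ∈ S) (hxy : x ≠ y) :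
    ‖x - y‖ ^ 2 / (2 * S.card) ≤ opNorm (fcov S) := by
  have hS : S.Nonempty := ⟨x, hx⟩
  have hc : (0:ℝ) < S.card := by exact_mod_cast Finset.card_pos.mpr hS
  have hD : (0:ℝ) < ‖x - y‖ := by
    rw [norm_pos_iff]; exact sub_ne_zero_of_ne hxy
  set u : EuclideanSpace ℝ (Fin d) := ‖x - y‖⁻¹ • (x - y) with hu
  have hnu : ‖u‖ = 1 := by
    rw [hu, norm_smul, Real.norm_eq_abs, abs_of_pos (by positivity), inv_mul_cancel₀ hD.ne']
  set c : EuclideanSpace ℝ (Fin d) → ℝ := fun p => (inner ℝ (p - fmean S) u : ℝ) with hcdef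
  have hinner : (inner ℝ (Matrix.toEuclideanLin (fcov S) u) u : ℝ)
      = (S.card : ℝ)⁻¹ * ∑ p ∈ S, (c p) ^ 2 := by
    rw [fcov_apply', real_inner_smul_left, sum_inner]
    congr 1
    refine Finset.sum_congr rfl fun p _ => ?_
    rw [real_inner_smul_left, hcdef]
    ring
  have hsub : c x - c y = ‖x - y‖ := by
    rw [hcdef]
    simp only
    rw [← inner_sub_left]
    have : (x - fmean S) - (y - fmean S) = x - y := by abel
    rw [this, hu, real_inner_smul_right, real_inner_self_eq_norm_sq]
    field_simp
  have hpair : (c x) ^ 2 + (c y) ^ 2 ≤ ∑ p ∈ S, (c p) ^ 2 := by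
    have hsub2 : ({x, y} : Finset (EuclideanSpace ℝ (Fin d))) ⊆ S := by
      intro z hz
      rcases Finset.mem_insert.mp hz with h | h
      · rwa [h]
      · rw [Finset.mem_singleton.mp h]; exact hy
    calc (c x) ^ 2 + (c y) ^ 2 = ∑ p ∈ ({x, y} : Finset _), (c p) ^ 2 := by
          rw [Finset.sum_pair hxy]
    _ ≤ ∑ p ∈ S, (c p) ^ 2 :=
          Finset.sum_le_sum_of_subset_of_nonneg hsub2 (fun p _ _ => sq_nonneg _)
  have hlow : ‖x - y‖ ^ 2 / 2 ≤ ∑ p ∈ S, (c p) ^ 2 := by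
    nlinarith [sq_nonneg (c x + c y), hpair, hsub]
  have hLnorm : (inner ℝ (Matrix.toEuclideanLin (fcov S) u) u : ℝ) ≤ opNorm (fcov S) := by
    calc (inner ℝ (Matrix.toEuclideanLin (fcov S) u) u : ℝ)
        ≤ ‖Matrix.toEuclideanLin (fcov S) u‖ * ‖u‖ := real_inner_le_norm _ _
    _ = ‖LinearMap.toContinuousLinearMap (Matrix.toEuclideanLin (fcov S)) u‖ := by
          rw [hnu, mul_one]; rfl
    _ ≤ opNorm (fcov S) * ‖u‖ :=
          (LinearMap.toContinuousLinearMap (Matrix.toEuclideanLin (fcov S))).le_opNorm u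
    _ = opNorm (fcov S) := by rw [hnu, mul_one]
  calc ‖x - y‖ ^ 2 / (2 * S.card) = (S.card : ℝ)⁻¹ * (‖x - y‖ ^ 2 / 2) := by
        field_simp
  _ ≤ (S.card : ℝ)⁻¹ * ∑ p ∈ S, (c p) ^ 2 := by
        apply mul_le_mul_of_nonneg_left hlow (by positivity)
  _ = (inner ℝ (Matrix.toEuclideanLin (fcov S) u) u : ℝ) := hinner.symm
  _ ≤ opNorm (fcov S) := hLnorm

lemma pow_clog_le_sq {m : ℕ} (hm : 2 ≤ m) : 2 ^ (Nat.clog 2 m + 1) ≤ m ^ 2 := by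
  have h1 : 2 ^ (Nat.clog 2 m).pred < m := Nat.pow_pred_clog_lt_self (by norm_num) hm
  have h2 : 0 < Nat.clog 2 m := Nat.clog_pos (by norm_num) hm
  have h3 : Nat.clog 2 m + 1 = (Nat.clog 2 m).pred + 2 := by
    rw [Nat.pred_eq_sub_one]; omega
  rw [h3, pow_add]
  nlinarith [h1, hm]

lemma grid_cover {a v : ℝ} (ha : 0 < a) (hav : a ≤ v) {N : ℕ} (hN : v ≤ 2 ^ N * a) :
    ∃ j ≤ N, v ≤ 2 ^ j * a ∧ 2 ^ j * a ≤ 2 * v := by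
  classical
  have hP : ∃ j : ℕ, v ≤ 2 ^ j * a := ⟨N, hN⟩
  set j := Nat.find hP with hjdef
  have hj : v ≤ 2 ^ j * a := Nat.find_spec hP
  have hjN : j ≤ N := Nat.find_min' hP hN
  refine ⟨j, hjN, hj, ?_⟩
  rcases Nat.eq_zero_or_pos j with h | h
  · rw [h]; norm_num; linarith
  · have hmin : ¬ (v ≤ 2 ^ (j - 1) * a) := Nat.find_min hP (by omega)
    push_neg at hmin
    have h2 : (2:ℝ) ^ j * a = 2 * (2 ^ (j-1) * a) := by
      rw [← mul_assoc]
      congr 1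
      rw [← pow_succ']
      congr 1
      omega
    linarith


set_option maxHeartbeats 1000000 in
/-- List of candidate standard deviations.
For every finite set `T` of `m ≥ 2` points in `ℝ^d` there is a list `L` of at most
`m² (log₂(2 m²) + 1)` nonnegative reals such that every `S ⊆ T` with at least two distinct points
admits `ŝ ∈ L` with `‖Cov(S)‖_op ≤ ŝ² ≤ 2 ‖Cov(S)‖_op`. -/
theorem candidate_stdev_list {d : ℕ} (T : Finset (EuclideanSpace ℝ (Fin d)))
    (hm : 2 ≤ T.card) :
    ∃ L : List ℝ, (∀ s ∈ L, (0 : ℝ) ≤ s) ∧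
      (L.length : ℝ) ≤ (T.card : ℝ) ^ 2 * (Real.logb 2 (2 * (T.card : ℝ) ^ 2) + 1) ∧
      ∀ S ⊆ T, (∃ x ∈ S, ∃ y ∈ S, x ≠ y) →
        ∃ shat ∈ L, opNorm (fcov S) ≤ shat ^ 2 ∧ shat ^ 2 ≤ 2 * opNorm (fcov S) := by
  classical
  set m := T.card with hmdef
  have hm0 : (0:ℝ) < m := by positivity
  set N := Nat.clog 2 m + 2 with hNdef
  set f : (EuclideanSpace ℝ (Fin d)) × (EuclideanSpace ℝ (Fin d)) → List ℝ :=
    fun pq => (List.range (N+1)).map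
      (fun j => ‖pq.1 - pq.2‖ * Real.sqrt 2 ^ j / (2 * Real.sqrt m)) with hfdef
  refine ⟨(T ×ˢ T).toList.flatMap f, ?_, ?_, ?_⟩
  · intro s hs
    obtain ⟨pq, _, hs2⟩ := List.mem_flatMap.mp hs
    obtain ⟨j, _, rfl⟩ := List.mem_map.mp hs2
    positivity
  · -- length bound
    have hlen : ((T ×ˢ T).toList.flatMap f).length = m ^ 2 * (N + 1) := by
      rw [List.length_flatMap]
      have h1 : List.map (fun a => (f a).length) (T ×ˢ T).toList
          = List.replicate (T ×ˢ T).toList.length (N+1) := by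
        rw [← List.map_const']
        apply List.map_congr_left
        intro pq _
        simp [hfdef]
      rw [h1, List.sum_replicate, smul_eq_mul, Finset.length_toList,
        Finset.card_product, ← hmdef, ← sq]
    rw [hlen]
    have hkey : ((N:ℝ) + 1) ≤ Real.logb 2 (2 * (m:ℝ) ^ 2) + 1 := by
      have hpow : ((2:ℝ)) ^ N ≤ 2 * (m:ℝ) ^ 2 := by
        have := pow_clog_le_sq hm
        have h2 : (2:ℕ) ^ (Nat.clog 2 m + 2) ≤ 2 * m ^ 2 := by
          rw [pow_succ]
          omega
        exact_mod_cast h2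
      have h3 : (N:ℝ) = Real.logb 2 ((2:ℝ) ^ N) := by
        rw [Real.logb_pow, Real.logb_self_eq_one (by norm_num), mul_one]
      have h4 : Real.logb 2 ((2:ℝ) ^ N) ≤ Real.logb 2 (2 * (m:ℝ) ^ 2) :=
        (Real.logb_le_logb (by norm_num) (by positivity) (by positivity)).mpr hpow
      linarith [h3 ▸ h4]
    calc ((m ^ 2 * (N + 1) : ℕ) : ℝ) = (m:ℝ) ^ 2 * ((N:ℝ) + 1) := by push_cast; ring
    _ ≤ (m:ℝ) ^ 2 * (Real.logb 2 (2 * (m:ℝ) ^ 2) + 1) :=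
        mul_le_mul_of_nonneg_left hkey (by positivity)
  · -- coverage
    intro S hST ⟨x0, hx0, y0, hy0, hne⟩
    obtain ⟨⟨x, y⟩, hxyS, hmax⟩ := Finset.exists_max_image (S ×ˢ S)
      (fun p => ‖p.1 - p.2‖) ⟨(x0, y0), Finset.mem_product.mpr ⟨hx0, hy0⟩⟩
    obtain ⟨hx, hy⟩ := Finset.mem_product.mp hxyS
    set D := ‖x - y‖ with hDdef
    have hD0 : 0 < D := by
      have h0 : (0:ℝ) < ‖x0 - y0‖ := by rw [norm_pos_iff]; exact sub_ne_zero_of_ne hne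
      exact lt_of_lt_of_le h0 (hmax (x0, y0) (Finset.mem_product.mpr ⟨hx0, hy0⟩))
    have hxy : x ≠ y := by
      intro h
      rw [h] at hDdef
      simp [hDdef] at hD0
    have hScard : 1 ≤ S.card := Finset.card_pos.mpr ⟨x, hx⟩
    have hSm : S.card ≤ m := Finset.card_le_card hST
    have hn0 : (0:ℝ) < S.card := by exact_mod_cast hScard
    set v := opNorm (fcov S) with hvdef
    set a := D ^ 2 / (4 * (m:ℝ)) with hadef
    have ha : 0 < a := by positivity
    have hav : a ≤ v := by
      have h1 : D ^ 2 / (4 * (m:ℝ)) ≤ D ^ 2 / (2 * S.card) := by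
        apply div_le_div_of_nonneg_left (by positivity) (by positivity)
        have : (S.card : ℝ) ≤ m := by exact_mod_cast hSm
        linarith
      exact le_trans h1 (le_opNorm_fcov S hx hy hxy)
    have hclog : (m:ℝ) ≤ 2 ^ Nat.clog 2 m := by
      exact_mod_cast Nat.le_pow_clog (by norm_num) m
    have hvN : v ≤ 2 ^ N * a := by
      have hup : v ≤ D ^ 2 :=
        opNorm_fcov_le S ⟨x, hx⟩ (fun p hp q hq => hmax (p, q) (Finset.mem_product.mpr ⟨hp, hq⟩))
      have h2N : (2:ℝ) ^ N = 4 * 2 ^ Nat.clog 2 m := by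
        rw [hNdef, pow_add]; ring
      have h5 : D ^ 2 ≤ 2 ^ N * a := by
        rw [h2N, hadef, ← mul_div_assoc, le_div_iff₀ (by positivity)]
        nlinarith [hclog, sq_nonneg D]
      linarith
    obtain ⟨j, hjN, hj1, hj2⟩ := grid_cover ha hav hvN
    set shat := D * Real.sqrt 2 ^ j / (2 * Real.sqrt m) with hshatdef
    have hshat2 : shat ^ 2 = 2 ^ j * a := by
      have h1 : (Real.sqrt 2 ^ j) ^ 2 = 2 ^ j := by
        rw [← pow_mul, mul_comm, pow_mul, Real.sq_sqrt (by norm_num : (0:ℝ) ≤ 2)]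
      have h2 : (Real.sqrt m) ^ 2 = (m:ℝ) := Real.sq_sqrt (by positivity)
      rw [hshatdef, div_pow, mul_pow, h1, mul_pow, h2, hadef]
      field_simp
      ring
    refine ⟨shat, ?_, ?_, ?_⟩
    · apply List.mem_flatMap.mpr
      refine ⟨(x, y), Finset.mem_toList.mpr (Finset.mem_product.mpr ⟨hST hx, hST hy⟩), ?_⟩
      apply List.mem_map.mpr
      exact ⟨j, List.mem_range.mpr (by omega), rfl⟩
    · rw [hshat2]; exact hj1
    · rw [hshat2]; exact hj2
end

section
/- Let T be a finite set of points in ℝ^d, let S_1,…,S_k ⊆ T be pairwise disjoint subsets, let μ ∈ ℝ^d, s > 0, C > 0, α ∈ (0,1), and let v_1,…,v_k be unit vectors in ℝ^d with k ≤ ⌊1/α⌋. Suppose the weights w_x ∈ [0,1] for x ∈ T satisfy the Ky-Fan constraint ‖∑_{x∈T} w_x (x−μ)(x−μ)ᵀ‖_(⌊1/α⌋) ≤ (2C²s²/α)·∑_{x∈T} w_x. For each j ∈ [k] define S_j^> = {x ∈ S_j : v_jᵀ(x−μ) > 45·C·s/√α}. Then ∑_{j=1}^k ∑_{x∈S_j^>}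 w_x ≤ 0.001·∑_{x∈T} w_x. -/
open scoped BigOperators

/-- The Ky-Fan `κ`-norm of a symmetric positive semidefinite `d × d` matrix: the sum of its
`min(κ, d)` largest eigenvalues, characterized as the supremum of `∑ i ⟪f i, M (f i)⟫` over
orthonormal families `f` of `min(κ, d)` vectors. -/
noncomputable def kyFan {d : ℕ} (κ : ℕ) (M : Matrix (Fin d) (Fin d) ℝ) : ℝ :=
  sSup { t : ℝ | ∃ f : Fin (min κ d) → (Fin d → ℝ),
    (∀ i j, (∑ a, f i a * f j a) = if i = j then (1 : ℝ) else 0) ∧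
    t = ∑ i, ∑ a, ∑ b, f i a * M a b * f i b }


lemma inner_as_sum {d : ℕ} (u y : EuclideanSpace ℝ (Fin d)) :
    (inner ℝ u y : ℝ) = ∑ a, u a * y a := by
  simp [PiLp.inner_apply, RCLike.inner_apply, mul_comm]

lemma quadForm_sum {d : ℕ} (T : Finset (EuclideanSpace ℝ (Fin d)))
    (w : EuclideanSpace ℝ (Fin d) → ℝ) (μ : EuclideanSpace ℝ (Fin d))
    (u : Fin d → ℝ) :
    (∑ a, ∑ c, u a * (∑ x ∈ T, w x • outerMat (x - μ)) a c * u c)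
      = ∑ x ∈ T, w x * (∑ a, u a * (x - μ) a) ^ 2 := by
  have h1 : (∑ a, ∑ c, u a * (∑ x ∈ T, w x • outerMat (x - μ)) a c * u c)
      = ∑ a, ∑ c, ∑ x ∈ T, u a * (w x * ((x - μ) a * (x - μ) c)) * u c := by
    simp only [Matrix.sum_apply, Matrix.smul_apply, outerMat, Matrix.of_apply, smul_eq_mul,
      Finset.mul_sum, Finset.sum_mul]
  rw [h1]
  rw [Finset.sum_congr rfl fun a _ => Finset.sum_comm]
  rw [Finset.sum_comm]
  refine Finset.sum_congr rfl fun x _ => ?_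
  rw [sq, Finset.sum_mul_sum]
  rw [Finset.mul_sum]
  refine Finset.sum_congr rfl fun a _ => ?_
  rw [Finset.mul_sum]
  refine Finset.sum_congr rfl fun c _ => ?_
  ring

lemma aux_cs {d : ℕ} (b : OrthonormalBasis (Fin d) ℝ (EuclideanSpace ℝ (Fin d)))
    (v y : EuclideanSpace ℝ (Fin d)) (hv : ‖v‖ = 1) (s' : Finset (Fin d))
    (h0 : ∀ i ∉ s', (inner ℝ v (b i) : ℝ) = 0) :
    (inner ℝ v y : ℝ) ^ 2 ≤ ∑ i ∈ s', (inner ℝ (b i) y : ℝ) ^ 2 := by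
  have h1 : (inner ℝ v y : ℝ) = ∑ i ∈ s', (inner ℝ v (b i) : ℝ) * (inner ℝ (b i) y : ℝ) := by
    rw [← b.sum_inner_mul_inner v y]
    exact (Finset.sum_subset s'.subset_univ (fun i _ hi => by rw [h0 i hi, zero_mul])).symm
  have h2 := Finset.sum_mul_sq_le_sq_mul_sq s' (fun i => (inner ℝ v (b i) : ℝ))
    (fun i => (inner ℝ (b i) y : ℝ))
  have h3 : (∑ i ∈ s', (inner ℝ v (b i) : ℝ) ^ 2) ≤ 1 := by
    have h4 : (∑ i, (inner ℝ v (b i) : ℝ) ^ 2) = 1 := by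
      have := b.sum_inner_mul_inner v v
      simp only [real_inner_self_eq_norm_sq, hv, one_pow] at this
      rw [← this]
      exact Finset.sum_congr rfl fun i _ => by rw [sq, real_inner_comm (b i) v]
    rw [← h4]
    exact Finset.sum_le_sum_of_subset_of_nonneg s'.subset_univ fun i _ _ => sq_nonneg _
  calc (inner ℝ v y : ℝ) ^ 2 = (∑ i ∈ s', (inner ℝ v (b i) : ℝ) * (inner ℝ (b i) y : ℝ)) ^ 2 := by
        rw [h1]
    _ ≤ (∑ i ∈ s', (inner ℝ v (b i) : ℝ) ^ 2) * ∑ i ∈ s', (inner ℝ (b i) y : ℝ) ^ 2 := h2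
    _ ≤ 1 * ∑ i ∈ s', (inner ℝ (b i) y : ℝ) ^ 2 := by
        apply mul_le_mul_of_nonneg_right h3
        exact Finset.sum_nonneg fun i _ => sq_nonneg _
    _ = _ := one_mul _

lemma exists_good_basis {d k : ℕ} (v : Fin k → EuclideanSpace ℝ (Fin d)) :
    ∃ (m0 : ℕ) (b : OrthonormalBasis (Fin d) ℝ (EuclideanSpace ℝ (Fin d))),
      m0 ≤ k ∧ m0 ≤ d ∧
      ∀ (j : Fin k) (i : Fin d), m0 ≤ (i : ℕ) → (inner ℝ (v j) (b i) : ℝ) = 0 := by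
  classical
  set U := Submodule.span ℝ (Set.range v) with hU
  set m0 := Module.finrank ℝ U with hm0
  have hm0d : m0 ≤ d := by
    have := Submodule.finrank_le U
    rwa [finrank_euclideanSpace_fin] at this
  have hm0k : m0 ≤ k := by
    have h1 := finrank_span_le_card (R := ℝ) (Set.range v)
    have h2 : (Set.range v).toFinset.card ≤ k := by
      rw [Set.toFinset_card]
      simpa using Fintype.card_range_le v
    exact h1.trans h2
  set bU := stdOrthonormalBasis ℝ U with hbU
  set g : Fin d → EuclideanSpace ℝ (Fin d) :=
    fun i => if h : (i : ℕ) < m0 then (bU ⟨i, h⟩ : EuclideanSpace ℝ (Fin d)) else 0 with hg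
  have hgo : Orthonormal ℝ (Set.restrict {i : Fin d | (i : ℕ) < m0} g) := by
    rw [orthonormal_iff_ite]
    rintro ⟨i, hi⟩ ⟨i', hi'⟩
    have hi : (i : ℕ) < m0 := hi
    have hi' : (i' : ℕ) < m0 := hi'
    simp only [Set.restrict_apply, Set.restrict, hg, dif_pos hi, dif_pos hi']
    rw [← Submodule.coe_inner, orthonormal_iff_ite.mp bU.orthonormal]
    by_cases h : i = i'
    · subst h; simp
    · rw [if_neg (by simp [Fin.ext_iff, Fin.val_ne_of_ne h]), if_neg (by
        simp only [Ne, Subtype.mk_eq_mk]; exact h)]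
  obtain ⟨b, hb⟩ := hgo.exists_orthonormalBasis_extension_of_card_eq
    (by simp [finrank_euclideanSpace])
  refine ⟨m0, b, hm0k, hm0d, ?_⟩
  intro j i hi
  have hvj : v j ∈ U := Submodule.subset_span ⟨j, rfl⟩
  have hUspan : U = Submodule.span ℝ
      (Set.range (fun t : Fin m0 => (bU t : EuclideanSpace ℝ (Fin d)))) := by
    have h1 : Submodule.span ℝ (Set.range bU) = (⊤ : Submodule ℝ U) := by
      rw [← bU.coe_toBasis]; exact bU.toBasis.span_eq
    calc U = Submodule.map U.subtype ⊤ := by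
          rw [Submodule.map_top, Submodule.range_subtype]
      _ = Submodule.map U.subtype (Submodule.span ℝ (Set.range bU)) := by rw [h1]
      _ = Submodule.span ℝ (U.subtype '' Set.range bU) := Submodule.map_span _ _
      _ = Submodule.span ℝ (Set.range (fun t : Fin m0 => (bU t : EuclideanSpace ℝ (Fin d)))) := by
          rw [← Set.range_comp]; rfl
  have key : ∀ u ∈ U, (inner ℝ u (b i) : ℝ) = 0 := by
    rw [hUspan]
    intro u hu
    induction hu using Submodule.span_induction with
    | mem x hx =>
        obtain ⟨t, rfl⟩ := hx
        have ht : ((⟨(t : ℕ), lt_of_lt_of_le t.2 hm0d⟩ : Fin d) : ℕ) < m0 := t.2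
        have hbt : b ⟨(t : ℕ), lt_of_lt_of_le t.2 hm0d⟩ = (bU t : EuclideanSpace ℝ (Fin d)) := by
          rw [hb _ ht]
          simp [hg, dif_pos ht]
        show (inner ℝ ((bU t : EuclideanSpace ℝ (Fin d))) (b i) : ℝ) = 0
        rw [← hbt]
        have := orthonormal_iff_ite.mp b.orthonormal ⟨(t : ℕ), lt_of_lt_of_le t.2 hm0d⟩ i
        rw [this, if_neg]
        intro h
        rw [Fin.ext_iff] at h
        simp only at h
        omega
    | zero => exact inner_zero_left _
    | add x y hx hy ihx ihy => rw [inner_add_left, ihx, ihy, add_zero]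
    | smul a x hx ihx => rw [real_inner_smul_left, ihx, mul_zero]
  exact key _ hvj

/-- Points far from `μ` in the cluster directions have small total weight.
If the weights satisfy the Ky-Fan constraint
`‖∑_x w_x (x−μ)(x−μ)ᵀ‖_(⌊1/α⌋) ≤ (2C²s²/α) ∑_x w_x`, then the total weight of the points of each
cluster lying beyond `45 C s/√α` from `μ` along its direction `v_j` is at most `0.001 ∑_x w_x`. -/
theorem far_points_small_weight {d k : ℕ} (T : Finset (EuclideanSpace ℝ (Fin d)))
    (S : Fin k → Finset (EuclideanSpace ℝ (Fin d)))
    (hSsub : ∀ j, S j ⊆ T)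
    (hSdisj : ∀ j j' : Fin k, j ≠ j' → Disjoint (S j) (S j'))
    (μ : EuclideanSpace ℝ (Fin d)) (s C α : ℝ)
    (hs : 0 < s) (hC : 0 < C) (hα0 : 0 < α) (hα1 : α < 1)
    (v : Fin k → EuclideanSpace ℝ (Fin d)) (hv : ∀ j, ‖v j‖ = 1)
    (hk : k ≤ ⌊1 / α⌋₊)
    (w : EuclideanSpace ℝ (Fin d) → ℝ)
    (hw01 : ∀ x ∈ T, 0 ≤ w x ∧ w x ≤ 1)
    (hKF : kyFan ⌊1 / α⌋₊ (∑ x ∈ T, w x • outerMat (x - μ))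
        ≤ 2 * C ^ 2 * s ^ 2 / α * ∑ x ∈ T, w x) :
    ∑ j : Fin k, ∑ x ∈ (S j).filter
        (fun x => 45 * C * s / Real.sqrt α < (inner ℝ (v j) (x - μ) : ℝ)), w x
      ≤ 0.001 * ∑ x ∈ T, w x := by
  classical
  set κ := ⌊1 / α⌋₊ with hκ
  set M := ∑ x ∈ T, w x • outerMat (x - μ) with hM
  set W := ∑ x ∈ T, w x with hW
  set τ := 45 * C * s / Real.sqrt α with hτdef
  have hW0 : 0 ≤ W := Finset.sum_nonneg fun x hx => (hw01 x hx).1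
  have hsqα : (0:ℝ) < Real.sqrt α := Real.sqrt_pos.mpr hα0
  have hτ0 : 0 < τ := by rw [hτdef]; positivity
  have hτsq : τ ^ 2 = 2025 * (C ^ 2 * s ^ 2 / α) := by
    rw [hτdef, div_pow, Real.sq_sqrt hα0.le]; ring
  -- the orthonormal family
  obtain ⟨m0, b, hm0k, hm0d, hborth⟩ := exists_good_basis v
  have hm0m : m0 ≤ min κ d := le_min (hm0k.trans hk) hm0d
  set f : Fin (min κ d) → Fin d → ℝ :=
    fun i a => b (Fin.castLE (min_le_right κ d) i) a with hfdef
  have hforth : ∀ i j, (∑ a, f i a * f j a) = if i = j then (1:ℝ) else 0 := by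
    intro i j
    have h1 : (∑ a, f i a * f j a)
        = (inner ℝ (b (Fin.castLE (min_le_right κ d) i)) (b (Fin.castLE (min_le_right κ d) j)) : ℝ) := by
      rw [inner_as_sum]
    rw [h1, orthonormal_iff_ite.mp b.orthonormal]
    simp [Fin.castLE_inj]
  -- G x : the projected squared norm
  set G : EuclideanSpace ℝ (Fin d) → ℝ :=
    fun y => ∑ i : Fin (min κ d), (inner ℝ (b (Fin.castLE (min_le_right κ d) i)) (y - μ) : ℝ) ^ 2
    with hGdef
  have hG0 : ∀ y, 0 ≤ G y := fun y => Finset.sum_nonneg fun i _ => sq_nonneg _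
  -- t is in the kyFan set
  set t := ∑ i, ∑ a, ∑ c, f i a * M a c * f i c with htdef
  have htmem : t ∈ { t : ℝ | ∃ f : Fin (min κ d) → (Fin d → ℝ),
      (∀ i j, (∑ a, f i a * f j a) = if i = j then (1 : ℝ) else 0) ∧
      t = ∑ i, ∑ a, ∑ b, f i a * M a b * f i b } := ⟨f, hforth, rfl⟩
  have hbdd : BddAbove { t : ℝ | ∃ f : Fin (min κ d) → (Fin d → ℝ),
      (∀ i j, (∑ a, f i a * f j a) = if i = j then (1 : ℝ) else 0) ∧
      t = ∑ i, ∑ a, ∑ b, f i a * M a b * f i b } := by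
    refine ⟨(min κ d) * ∑ a, ∑ c, |M a c|, ?_⟩
    rintro x ⟨f', hf', rfl⟩
    have habs : ∀ i a, |f' i a| ≤ 1 := by
      intro i a
      have h1 := hf' i i
      rw [if_pos rfl] at h1
      have h2 : f' i a * f' i a ≤ 1 := by
        rw [← h1]
        exact Finset.single_le_sum (fun a' _ => mul_self_nonneg (f' i a')) (Finset.mem_univ a)
      exact abs_le_one_iff_mul_self_le_one.mpr h2
    calc ∑ i, ∑ a, ∑ c, f' i a * M a c * f' i c
        ≤ ∑ _i : Fin (min κ d), ∑ a, ∑ c, |M a c| := by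
          refine Finset.sum_le_sum fun i _ => Finset.sum_le_sum fun a _ =>
            Finset.sum_le_sum fun c _ => ?_
          have h3 := habs i a
          have h4 := habs i c
          calc f' i a * M a c * f' i c ≤ |f' i a * M a c * f' i c| := le_abs_self _
            _ = |f' i a| * |M a c| * |f' i c| := by rw [abs_mul, abs_mul]
            _ ≤ 1 * |M a c| * 1 :=
                mul_le_mul (mul_le_mul_of_nonneg_right h3 (abs_nonneg _)) h4
                  (abs_nonneg _) (by positivity)
            _ = |M a c| := by ring
      _ = (min κ d) * ∑ a, ∑ c, |M a c| := by
          rw [Finset.sum_const, Finset.card_univ, Fintype.card_fin, nsmul_eq_mul]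
  have htky : t ≤ kyFan κ M := le_csSup hbdd htmem
  -- t equals the weighted sum of G
  have htval : t = ∑ x ∈ T, w x * G x := by
    rw [htdef]
    have h1 : ∀ i : Fin (min κ d), (∑ a, ∑ c, f i a * M a c * f i c)
        = ∑ x ∈ T, w x * (inner ℝ (b (Fin.castLE (min_le_right κ d) i)) (x - μ) : ℝ) ^ 2 := by
      intro i
      rw [hM, quadForm_sum T w μ (f i)]
      refine Finset.sum_congr rfl fun x _ => ?_
      rw [inner_as_sum]
    rw [Finset.sum_congr rfl fun i _ => h1 i, Finset.sum_comm]
    refine Finset.sum_congr rfl fun x _ => ?_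
    rw [hGdef, Finset.mul_sum]
  -- key pointwise inequality
  have hpt : ∀ (j : Fin k) (y : EuclideanSpace ℝ (Fin d)),
      (inner ℝ (v j) (y - μ) : ℝ) ^ 2 ≤ G y := by
    intro j y
    set s' : Finset (Fin d) := Finset.univ.filter (fun i : Fin d => (i : ℕ) < m0) with hs'
    have h0 : ∀ i ∉ s', (inner ℝ (v j) (b i) : ℝ) = 0 := by
      intro i hi
      refine hborth j i ?_
      simp only [hs', Finset.mem_filter, Finset.mem_univ, true_and, not_lt] at hi
      exact hi
    refine (aux_cs b (v j) (y - μ) (hv j) s' h0).trans ?_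
    have hsub : s' ⊆ Finset.univ.image (Fin.castLE (min_le_right κ d)) := by
      intro i hi
      simp only [hs', Finset.mem_filter, Finset.mem_univ, true_and] at hi
      refine Finset.mem_image.mpr ⟨⟨(i : ℕ), lt_of_lt_of_le hi hm0m⟩, Finset.mem_univ _, ?_⟩
      ext; rfl
    refine le_trans (Finset.sum_le_sum_of_subset_of_nonneg hsub fun _ _ _ => sq_nonneg _) ?_
    rw [Finset.sum_image (fun x _ y _ h => Fin.castLE_injective _ h)]
  -- the disjoint union bound
  have key : ∀ A : ℝ, 2025 * (C ^ 2 * s ^ 2 / α) * A ≤ 2 * C ^ 2 * s ^ 2 / α * W →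
      A ≤ 0.001 * W := by
    intro A h
    have hc : (0:ℝ) < C ^ 2 * s ^ 2 / α := by positivity
    have h' : (C ^ 2 * s ^ 2 / α) * (2025 * A) ≤ (C ^ 2 * s ^ 2 / α) * (2 * W) := by
      calc (C ^ 2 * s ^ 2 / α) * (2025 * A) = 2025 * (C ^ 2 * s ^ 2 / α) * A := by ring
        _ ≤ 2 * C ^ 2 * s ^ 2 / α * W := h
        _ = (C ^ 2 * s ^ 2 / α) * (2 * W) := by ring
    have h2 : 2025 * A ≤ 2 * W := le_of_mul_le_mul_left h' hc
    linarith [hW0, h2]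
  apply key
  calc 2025 * (C ^ 2 * s ^ 2 / α) * ∑ j : Fin k, ∑ x ∈ (S j).filter
        (fun x => τ < (inner ℝ (v j) (x - μ) : ℝ)), w x
      = ∑ j : Fin k, ∑ x ∈ (S j).filter
        (fun x => τ < (inner ℝ (v j) (x - μ) : ℝ)), τ ^ 2 * w x := by
        rw [Finset.mul_sum]
        refine Finset.sum_congr rfl fun j _ => ?_
        rw [Finset.mul_sum]
        exact Finset.sum_congr rfl fun x _ => by rw [hτsq]
    _ ≤ ∑ j : Fin k, ∑ x ∈ (S j).filter
        (fun x => τ < (inner ℝ (v j) (x - μ) : ℝ)), w x * G x := by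
        refine Finset.sum_le_sum fun j _ => Finset.sum_le_sum fun x hx => ?_
        rw [Finset.mem_filter] at hx
        have hxT : x ∈ T := hSsub j hx.1
        have hw0 : 0 ≤ w x := (hw01 x hxT).1
        have hlt : τ < (inner ℝ (v j) (x - μ) : ℝ) := hx.2
        have hsq : τ ^ 2 ≤ (inner ℝ (v j) (x - μ) : ℝ) ^ 2 :=
          pow_le_pow_left₀ hτ0.le hlt.le 2
        calc τ ^ 2 * w x ≤ (inner ℝ (v j) (x - μ) : ℝ) ^ 2 * w x :=
              mul_le_mul_of_nonneg_right hsq hw0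
          _ ≤ G x * w x := mul_le_mul_of_nonneg_right (hpt j x) hw0
          _ = w x * G x := mul_comm _ _
    _ ≤ ∑ x ∈ T, w x * G x := by
        rw [← Finset.sum_biUnion]
        · refine Finset.sum_le_sum_of_subset_of_nonneg ?_ fun x hx _ => ?_
          · intro x hx
            rw [Finset.mem_biUnion] at hx
            obtain ⟨j, _, hj⟩ := hx
            exact hSsub j (Finset.mem_of_mem_filter x hj)
          · exact mul_nonneg (hw01 x hx).1 (hG0 x)
        · intro j _ j' _ hjj'
          exact Finset.disjoint_filter_filter (hSdisj j j' hjj')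
    _ = t := htval.symm
    _ ≤ kyFan κ M := htky
    _ ≤ 2 * C ^ 2 * s ^ 2 / α * W := hKF
end

section
/- Let T be a finite set of n points in ℝ^d, let S_1,…,S_k ⊆ T be pairwise disjoint nonempty subsets, let μ ∈ ℝ^d, s > 0, C ≥ 1, and α ∈ (0,1). Suppose that for every j ∈ [k] with σ_{S_j} < s/100 it holds that ‖μ − μ_{S_j}‖₂ ≥ 46·C·s/√α; for each such j let v_j be the unit vector in the direction of μ_{S_j} − μ and define S_j^≤ = {x ∈ S_j : v_jᵀ(x−μ) ≤ 45·C·s/√α}. Suppose the weights w_x ∈ [0,1] for x ∈ T satisfy ∑_{x∈T} w_x ≥ 0.97·α·n. Then ∑_{j : σ_{S_j} < s/100} ∑_{x∈S_j^≤} w_x ≤ 0.002·∑_{x∈T} w_x. -/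
open scoped BigOperators

lemma inner_outer {d : ℕ} (u v : EuclideanSpace ℝ (Fin d)) :
    (inner ℝ v (Matrix.toEuclideanLin (outerMat u) v) : ℝ) = (inner ℝ u v : ℝ)^2 := by
  simp only [PiLp.inner_apply, RCLike.inner_apply, conj_trivial,
    Matrix.toEuclideanLin_apply, PiLp.toLp_apply]
  simp only [outerMat, Matrix.mulVec, dotProduct, Matrix.of_apply]
  rw [sq, Finset.sum_mul_sum, Finset.sum_comm]
  congr 1; ext a
  rw [Finset.sum_mul]
  congr 1; ext b
  ring

lemma fstdev_nonneg {d : ℕ} (S : Finset (EuclideanSpace ℝ (Fin d))) : 0 ≤ fstdev S :=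
  Real.sqrt_nonneg _

lemma quad_le {d : ℕ} (S : Finset (EuclideanSpace ℝ (Fin d)))
    (v : EuclideanSpace ℝ (Fin d)) (hv : ‖v‖ = 1) :
    ∑ x ∈ S, (inner ℝ v (x - fmean S) : ℝ)^2 ≤ (S.card : ℝ) * (fstdev S)^2 := by
  have hcalc : (inner ℝ v (Matrix.toEuclideanLin (fcov S) v) : ℝ)
      = (S.card : ℝ)⁻¹ * ∑ x ∈ S, (inner ℝ v (x - fmean S) : ℝ)^2 := by
    rw [fcov, map_smul, map_sum, LinearMap.smul_apply, LinearMap.sum_apply,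
      real_inner_smul_right, inner_sum]
    congr 1
    refine Finset.sum_congr rfl fun x _ => ?_
    rw [inner_outer, real_inner_comm]
  have hbound : (inner ℝ v (Matrix.toEuclideanLin (fcov S) v) : ℝ) ≤ opNorm (fcov S) := by
    set L := LinearMap.toContinuousLinearMap (Matrix.toEuclideanLin (fcov S)) with hL
    have hLv : Matrix.toEuclideanLin (fcov S) v = L v := rfl
    calc (inner ℝ v (Matrix.toEuclideanLin (fcov S) v) : ℝ)
        ≤ ‖v‖ * ‖Matrix.toEuclideanLin (fcov S) v‖ := real_inner_le_norm _ _
      _ = ‖L v‖ := by rw [hv, one_mul, hLv]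
      _ ≤ ‖L‖ * ‖v‖ := L.le_opNorm v
      _ = opNorm (fcov S) := by rw [hv, mul_one, opNorm]
  have hsq : (fstdev S)^2 = opNorm (fcov S) := Real.sq_sqrt (norm_nonneg _)
  rcases Nat.eq_zero_or_pos S.card with h0 | hpos
  · have : S = ∅ := Finset.card_eq_zero.mp h0
    simp [this]
  · have hcpos : (0:ℝ) < (S.card : ℝ) := by exact_mod_cast hpos
    have := hcalc ▸ hbound
    calc ∑ x ∈ S, (inner ℝ v (x - fmean S) : ℝ)^2
        = (S.card : ℝ) * ((S.card : ℝ)⁻¹ * ∑ x ∈ S, (inner ℝ v (x - fmean S) : ℝ)^2) := by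
          field_simp
      _ ≤ (S.card : ℝ) * opNorm (fcov S) := by
          exact mul_le_mul_of_nonneg_left this hcpos.le
      _ = (S.card : ℝ) * (fstdev S)^2 := by rw [hsq]

/-- Points of small-deviation clusters close to `μ` carry little weight.
For clusters `S_j` with `σ_{S_j} < s/100` whose means are at distance at least `46 C s/√α` from
`μ`, the total weight of the points of `S_j` whose projection along the unit vector in direction
`μ_{S_j} − μ` is at most `45 C s/√α` is at most `0.002 ∑_{x∈T} w_x`. -/
theorem close_points_small_weight {d k : ℕ} (T : Finset (EuclideanSpace ℝ (Fin d)))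
    (S : Fin k → Finset (EuclideanSpace ℝ (Fin d)))
    (hSsub : ∀ j, S j ⊆ T)
    (hSne : ∀ j, (S j).Nonempty)
    (hSdisj : ∀ j j' : Fin k, j ≠ j' → Disjoint (S j) (S j'))
    (μ : EuclideanSpace ℝ (Fin d)) (s C α : ℝ)
    (hs : 0 < s) (hC : 1 ≤ C) (hα0 : 0 < α) (hα1 : α < 1)
    (hfar : ∀ j, fstdev (S j) < s / 100 →
      46 * C * s / Real.sqrt α ≤ ‖μ - fmean (S j)‖)
    (w : EuclideanSpace ℝ (Fin d) → ℝ)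
    (hw01 : ∀ x ∈ T, 0 ≤ w x ∧ w x ≤ 1)
    (hwsum : 0.97 * α * (T.card : ℝ) ≤ ∑ x ∈ T, w x) :
    ∑ j ∈ Finset.univ.filter (fun j : Fin k => fstdev (S j) < s / 100),
      ∑ x ∈ (S j).filter (fun x =>
          (inner ℝ (‖fmean (S j) - μ‖⁻¹ • (fmean (S j) - μ)) (x - μ) : ℝ)
            ≤ 45 * C * s / Real.sqrt α), w x
      ≤ 0.002 * ∑ x ∈ T, w x := by
  have hsa : 0 < Real.sqrt α := Real.sqrt_pos.mpr hα0
  set t : ℝ := C * s / Real.sqrt α with ht_def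
  have hCpos : (0:ℝ) < C := lt_of_lt_of_le one_pos hC
  have ht : 0 < t := by positivity
  have ht2 : t^2 = C^2 * s^2 / α := by
    rw [ht_def, div_pow, mul_pow, Real.sq_sqrt hα0.le]
  -- key numeric inequality
  have hkey : (s/100)^2 ≤ α/10000 * t^2 := by
    have h1 : α/10000 * (C^2 * s^2 / α) = C^2 * s^2 / 10000 := by
      field_simp
    rw [ht2, div_pow, h1]
    nlinarith [sq_nonneg (C-1), sq_nonneg s, sq_nonneg ((C-1)*s)]
  -- per-cluster bound
  have hper : ∀ j ∈ Finset.univ.filter (fun j : Fin k => fstdev (S j) < s / 100),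
      ∑ x ∈ (S j).filter (fun x =>
          (inner ℝ (‖fmean (S j) - μ‖⁻¹ • (fmean (S j) - μ)) (x - μ) : ℝ)
            ≤ 45 * C * s / Real.sqrt α), w x ≤ α/10000 * ((S j).card : ℝ) := by
    intro j hj
    rw [Finset.mem_filter] at hj
    have hσ : fstdev (S j) < s / 100 := hj.2
    have hF := hfar j hσ
    have hfar' : 46 * t ≤ ‖fmean (S j) - μ‖ := by
      rw [norm_sub_rev]
      calc 46 * t = 46 * C * s / Real.sqrt α := by rw [ht_def]; ring
        _ ≤ ‖μ - fmean (S j)‖ := hF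
    have hnormpos : 0 < ‖fmean (S j) - μ‖ := lt_of_lt_of_le (by positivity) hfar'
    set u : EuclideanSpace ℝ (Fin d) := fmean (S j) - μ with hu
    set v : EuclideanSpace ℝ (Fin d) := ‖u‖⁻¹ • u with hv
    have hvnorm : ‖v‖ = 1 := by
      rw [hv, norm_smul, norm_inv, norm_norm, inv_mul_cancel₀ hnormpos.ne']
    set F := (S j).filter (fun x =>
        (inner ℝ (‖fmean (S j) - μ‖⁻¹ • (fmean (S j) - μ)) (x - μ) : ℝ)
          ≤ 45 * C * s / Real.sqrt α) with hF_def
    -- each x in F has (inner ℝ v (x - fmean (S j)))^2 ≥ t^2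
    have hdev : ∀ x ∈ F, t^2 ≤ (inner ℝ v (x - fmean (S j)) : ℝ)^2 := by
      intro x hx
      rw [hF_def, Finset.mem_filter] at hx
      have hxle : (inner ℝ v (x - μ) : ℝ) ≤ 45 * C * s / Real.sqrt α := hx.2
      have hinner_u : (inner ℝ v u : ℝ) = ‖u‖ := by
        rw [hv, real_inner_smul_left, real_inner_self_eq_norm_sq]
        field_simp
      have hsplit : (inner ℝ v (x - fmean (S j)) : ℝ) = (inner ℝ v (x - μ) : ℝ) - ‖u‖ := by
        have : x - fmean (S j) = (x - μ) - u := by rw [hu]; abel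
        rw [this, inner_sub_right, hinner_u]
      have h45 : (45:ℝ) * C * s / Real.sqrt α = 45 * t := by rw [ht_def]; ring
      have hle : (inner ℝ v (x - fmean (S j)) : ℝ) ≤ -t := by
        rw [hsplit]
        have : (inner ℝ v (x - μ) : ℝ) ≤ 45 * t := by rw [← h45]; exact hxle
        linarith
      have habs : t ≤ -(inner ℝ v (x - fmean (S j)) : ℝ) := by linarith
      calc t^2 ≤ (-(inner ℝ v (x - fmean (S j)) : ℝ))^2 := by
            exact pow_le_pow_left₀ ht.le habs 2
        _ = (inner ℝ v (x - fmean (S j)) : ℝ)^2 := by rw [neg_pow]; ring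
    -- Chebyshev
    have hcheb : (F.card : ℝ) * t^2 ≤ ((S j).card : ℝ) * (fstdev (S j))^2 := by
      calc (F.card : ℝ) * t^2 = ∑ _x ∈ F, t^2 := by rw [Finset.sum_const, nsmul_eq_mul]
        _ ≤ ∑ x ∈ F, (inner ℝ v (x - fmean (S j)) : ℝ)^2 := Finset.sum_le_sum hdev
        _ ≤ ∑ x ∈ S j, (inner ℝ v (x - fmean (S j)) : ℝ)^2 := by
            refine Finset.sum_le_sum_of_subset_of_nonneg (Finset.filter_subset _ _) ?_
            intro i _ _; positivity
        _ ≤ ((S j).card : ℝ) * (fstdev (S j))^2 := quad_le _ _ hvnorm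
    have hσ2 : (fstdev (S j))^2 ≤ (s/100)^2 :=
      pow_le_pow_left₀ (fstdev_nonneg _) hσ.le 2
    have hcard : (F.card : ℝ) ≤ α/10000 * ((S j).card : ℝ) := by
      have h1 : (F.card : ℝ) * t^2 ≤ (α/10000 * ((S j).card : ℝ)) * t^2 := by
        calc (F.card : ℝ) * t^2 ≤ ((S j).card : ℝ) * (fstdev (S j))^2 := hcheb
          _ ≤ ((S j).card : ℝ) * (s/100)^2 := by
              exact mul_le_mul_of_nonneg_left hσ2 (Nat.cast_nonneg _)
          _ ≤ ((S j).card : ℝ) * (α/10000 * t^2) := by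
              exact mul_le_mul_of_nonneg_left hkey (Nat.cast_nonneg _)
          _ = (α/10000 * ((S j).card : ℝ)) * t^2 := by ring
      exact le_of_mul_le_mul_right h1 (by positivity)
    have hwle : ∑ x ∈ F, w x ≤ (F.card : ℝ) := by
      calc ∑ x ∈ F, w x ≤ ∑ _x ∈ F, (1:ℝ) := by
            refine Finset.sum_le_sum fun x hx => ?_
            have hxT : x ∈ T := hSsub j (Finset.filter_subset _ _ hx)
            exact (hw01 x hxT).2
        _ = (F.card : ℝ) := by rw [Finset.sum_const, nsmul_eq_mul, mul_one]
    exact hwle.trans hcard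
  -- sum over clusters
  have htotal : ∑ j ∈ Finset.univ.filter (fun j : Fin k => fstdev (S j) < s / 100),
      ∑ x ∈ (S j).filter (fun x =>
          (inner ℝ (‖fmean (S j) - μ‖⁻¹ • (fmean (S j) - μ)) (x - μ) : ℝ)
            ≤ 45 * C * s / Real.sqrt α), w x
      ≤ α/10000 * (T.card : ℝ) := by
    calc ∑ j ∈ Finset.univ.filter (fun j : Fin k => fstdev (S j) < s / 100),
        ∑ x ∈ (S j).filter (fun x =>
            (inner ℝ (‖fmean (S j) - μ‖⁻¹ • (fmean (S j) - μ)) (x - μ) : ℝ)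
              ≤ 45 * C * s / Real.sqrt α), w x
        ≤ ∑ j ∈ Finset.univ.filter (fun j : Fin k => fstdev (S j) < s / 100),
            α/10000 * ((S j).card : ℝ) := Finset.sum_le_sum hper
      _ ≤ ∑ j : Fin k, α/10000 * ((S j).card : ℝ) := by
          refine Finset.sum_le_sum_of_subset_of_nonneg (Finset.filter_subset _ _) ?_
          intro i _ _; positivity
      _ = α/10000 * ∑ j : Fin k, ((S j).card : ℝ) := by rw [Finset.mul_sum]
      _ ≤ α/10000 * (T.card : ℝ) := by
          refine mul_le_mul_of_nonneg_left ?_ (by positivity)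
          have hcardsum : ∑ j : Fin k, (S j).card = (Finset.univ.biUnion S).card := by
            rw [Finset.card_biUnion]
            intro j _ j' _ hjj'
            exact hSdisj j j' hjj'
          have hsub : Finset.univ.biUnion S ⊆ T := by
            intro x hx
            rcases Finset.mem_biUnion.mp hx with ⟨j, _, hxj⟩
            exact hSsub j hxj
          calc ∑ j : Fin k, ((S j).card : ℝ) = ((∑ j : Fin k, (S j).card : ℕ) : ℝ) := by
                push_cast; ring
            _ = ((Finset.univ.biUnion S).card : ℝ) := by rw [hcardsum]
            _ ≤ (T.card : ℝ) := by exact_mod_cast Finset.card_le_card hsub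
  -- final numeric step
  have hfin : α/10000 * (T.card : ℝ) ≤ 0.002 * ∑ x ∈ T, w x := by
    have hn : (0:ℝ) ≤ (T.card : ℝ) := Nat.cast_nonneg _
    nlinarith [mul_nonneg hα0.le hn]
  exact htotal.trans hfin
end

section
/- Let S be a finite set of points in ℝ^d, let α ∈ (0,1) with α·|S| ≥ 2, and let β ≥ 0. Suppose that every subset S̃ ⊆ S with |S̃| ≥ (1−α)·|S| satisfies ‖μ_{S̃}‖₂ ≤ β. Then every subset S' ⊆ S with |S'| ≥ (α/2)·|S| satisfies ‖μ_{S'}‖₂ ≤ 4β/α. -/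
open scoped BigOperators

lemma filter_mem_powersetCard_card {X : Type*} [DecidableEq X] (A : Finset X) (k : ℕ) (x : X)
    (hx : x ∈ A) (hk : 1 ≤ k) :
    ((A.powersetCard k).filter (fun B => x ∈ B)).card = (A.card - 1).choose (k - 1) := by
  rw [← Finset.card_erase_of_mem hx, ← Finset.card_powersetCard (k-1) (A.erase x)]
  refine Finset.card_bij' (fun B _ => B.erase x) (fun C _ => insert x C) ?_ ?_ ?_ ?_
  · intro B hB
    simp only [Finset.mem_filter, Finset.mem_powersetCard] at hB
    simp only [Finset.mem_powersetCard]
    exact ⟨Finset.erase_subset_erase _ hB.1.1, by rw [Finset.card_erase_of_mem hB.2, hB.1.2]⟩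
  · intro C hC
    simp only [Finset.mem_powersetCard] at hC
    have hxC : x ∉ C := fun h => (Finset.mem_erase.1 (hC.1 h)).1 rfl
    simp only [Finset.mem_filter, Finset.mem_powersetCard]
    refine ⟨⟨?_, ?_⟩, Finset.mem_insert_self _ _⟩
    · exact Finset.insert_subset hx (hC.1.trans (Finset.erase_subset _ _))
    · rw [Finset.card_insert_of_notMem hxC, hC.2, Nat.sub_add_cancel hk]
  · intro B hB
    simp only [Finset.mem_filter] at hB
    exact Finset.insert_erase hB.2
  · intro C hC
    simp only [Finset.mem_powersetCard] at hC
    have hxC : x ∉ C := fun h => (Finset.mem_erase.1 (hC.1 h)).1 rfl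
    exact Finset.erase_insert hxC

lemma sum_powersetCard_sum {X M : Type*} [DecidableEq X] [AddCommMonoid M]
    (A : Finset X) (f : X → M) (k : ℕ) (hk : 1 ≤ k) :
    ∑ B ∈ A.powersetCard k, ∑ x ∈ B, f x = (A.card - 1).choose (k - 1) • ∑ x ∈ A, f x := by
  have h1 : ∀ B ∈ A.powersetCard k, ∑ x ∈ B, f x = ∑ x ∈ A, if x ∈ B then f x else 0 := by
    intro B hB
    rw [Finset.sum_ite_mem, Finset.inter_eq_right.2 (Finset.mem_powersetCard.1 hB).1]
  rw [Finset.sum_congr rfl h1, Finset.sum_comm, Finset.smul_sum]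
  refine Finset.sum_congr rfl fun x hx => ?_
  rw [← Finset.sum_filter, Finset.sum_const, filter_mem_powersetCard_card A k x hx hk]

/-- From means of large subsets to means of small subsets.
If every subset `S̃ ⊆ S` with `|S̃| ≥ (1−α)|S|` has `‖μ_{S̃}‖ ≤ β`, then every subset `S' ⊆ S`
with `|S'| ≥ (α/2)|S|` has `‖μ_{S'}‖ ≤ 4β/α`. -/
theorem small_subset_mean_bound {d : ℕ} (S : Finset (EuclideanSpace ℝ (Fin d))) (α β : ℝ)
    (hα0 : 0 < α) (hα1 : α < 1) (hcard : 2 ≤ α * (S.card : ℝ)) (hβ : 0 ≤ β)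
    (hbig : ∀ St ⊆ S, (1 - α) * (S.card : ℝ) ≤ (St.card : ℝ) → ‖fmean St‖ ≤ β) :
    ∀ S' ⊆ S, α / 2 * (S.card : ℝ) ≤ (S'.card : ℝ) → ‖fmean S'‖ ≤ 4 * β / α := by
  intro S' hS'sub hS'card
  have hc0 : (0:ℝ) < (S.card:ℝ) := by nlinarith
  have hSmean : ‖fmean S‖ ≤ β := hbig S subset_rfl (by nlinarith)
  have hsumS : ∑ x ∈ S, x = (S.card:ℝ) • fmean S := by
    rw [fmean, smul_smul, mul_inv_cancel₀ (ne_of_gt hc0), one_smul]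
  have small : ∀ A ⊆ S, (A.card:ℝ) ≤ α * S.card → ‖∑ x ∈ A, x‖ ≤ 2 * β * S.card := by
    intro A hA hAc
    have hTsub : S \ A ⊆ S := Finset.sdiff_subset
    have hTcard : ((S \ A).card : ℝ) = S.card - A.card := by
      rw [Finset.card_sdiff_of_subset hA, Nat.cast_sub (Finset.card_le_card hA)]
    have hTbig : (1 - α) * S.card ≤ ((S \ A).card : ℝ) := by rw [hTcard]; nlinarith
    have hTmean : ‖fmean (S \ A)‖ ≤ β := hbig _ hTsub hTbig
    have hT0 : (0:ℝ) < ((S \ A).card : ℝ) := lt_of_lt_of_le (by nlinarith) hTbig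
    have hsumT : ∑ x ∈ S \ A, x = (((S \ A).card:ℝ)) • fmean (S \ A) := by
      rw [fmean, smul_smul, mul_inv_cancel₀ (ne_of_gt hT0), one_smul]
    have hsplit : ∑ x ∈ A, x = ∑ x ∈ S, x - ∑ x ∈ S \ A, x := by
      rw [← Finset.sum_sdiff hA]; abel
    rw [hsplit, hsumS, hsumT]
    have h1 : ‖(S.card:ℝ) • fmean S - ((S\A).card:ℝ) • fmean (S\A)‖
        ≤ ‖(S.card:ℝ) • fmean S‖ + ‖((S\A).card:ℝ) • fmean (S\A)‖ := norm_sub_le _ _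
    rw [norm_smul, norm_smul, Real.norm_eq_abs, Real.norm_eq_abs,
      abs_of_pos hc0, abs_of_pos hT0] at h1
    have h2 : ((S\A).card:ℝ) ≤ (S.card:ℝ) := Nat.cast_le.2 (Finset.card_le_card hTsub)
    nlinarith [norm_nonneg (fmean S), norm_nonneg (fmean (S\A)),
      mul_le_mul_of_nonneg_left hSmean (le_of_lt hc0),
      mul_le_mul_of_nonneg_left hTmean (le_of_lt hT0)]
  set m := S'.card with hmdef
  have hm0 : (0:ℝ) < (m:ℝ) := lt_of_lt_of_le (by nlinarith) hS'card
  have hXnn : (0:ℝ) ≤ ‖∑ x ∈ S', x‖ := norm_nonneg _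
  have hX : ‖∑ x ∈ S', x‖ * α ≤ 4 * β * (m:ℝ) := by
    rcases le_or_gt ((m:ℝ)) (α * S.card) with h | h
    · have hs := small S' hS'sub h
      linarith [mul_le_mul_of_nonneg_right hs hα0.le,
        mul_le_mul_of_nonneg_left hS'card hβ]
    · set k := ⌈α * S.card / 2⌉₊ with hkdef
      have hklb : α * S.card / 2 ≤ (k:ℝ) := Nat.le_ceil _
      have hk1 : (1:ℝ) ≤ (k:ℝ) := le_trans (by nlinarith) hklb
      have hkub : (k:ℝ) ≤ α * S.card := by
        have := Nat.ceil_lt_add_one (by positivity : (0:ℝ) ≤ α * S.card / 2)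
        nlinarith
      have hk1' : 1 ≤ k := by exact_mod_cast hk1
      have hkm : k ≤ m := by
        have hlt : (k:ℝ) < (m:ℝ) := lt_of_le_of_lt hkub h
        exact_mod_cast hlt.le
      have hm1 : 1 ≤ m := hk1'.trans hkm
      have hper : ∀ B ∈ S'.powersetCard k, ‖∑ x ∈ B, x‖ ≤ 2 * β * S.card := by
        intro B hB
        obtain ⟨hBsub, hBcard⟩ := Finset.mem_powersetCard.1 hB
        exact small B (hBsub.trans hS'sub) (by rw [hBcard]; exact hkub)
      have hid : ∑ B ∈ S'.powersetCard k, ∑ x ∈ B, x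
          = (m-1).choose (k-1) • ∑ x ∈ S', x :=
        sum_powersetCard_sum S' (fun x => x) k hk1'
      have hbound : ‖∑ B ∈ S'.powersetCard k, ∑ x ∈ B, x‖
          ≤ (m.choose k : ℝ) * (2 * β * S.card) := by
        calc ‖∑ B ∈ S'.powersetCard k, ∑ x ∈ B, x‖
            ≤ ∑ B ∈ S'.powersetCard k, ‖∑ x ∈ B, x‖ := norm_sum_le _ _
          _ ≤ (S'.powersetCard k).card • (2 * β * S.card) :=
              Finset.sum_le_card_nsmul _ _ _ hper
          _ = (m.choose k : ℝ) * (2 * β * S.card) := by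
              rw [Finset.card_powersetCard, nsmul_eq_mul]
      have E1 : ((m-1).choose (k-1) : ℝ) * ‖∑ x ∈ S', x‖
          = ‖∑ B ∈ S'.powersetCard k, ∑ x ∈ B, x‖ := by
        rw [hid, RCLike.norm_nsmul ℝ, nsmul_eq_mul]
      have E3nat : m * (m-1).choose (k-1) = m.choose k * k := by
        have h6 : (m-1)+1 = m := by omega
        have h7 : (k-1)+1 = k := by omega
        have h8 := Nat.add_one_mul_choose_eq (m-1) (k-1)
        rwa [h6, h7] at h8
      have E3 : (m:ℝ) * ((m-1).choose (k-1) : ℝ) = (m.choose k : ℝ) * (k:ℝ) := by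
        exact_mod_cast congrArg (Nat.cast (R := ℝ)) E3nat
      have hN : (0:ℝ) < ((m-1).choose (k-1) : ℝ) := by
        exact_mod_cast Nat.choose_pos (by omega : k-1 ≤ m-1)
      have hk0 : (0:ℝ) ≤ (k:ℝ) := by positivity
      have s1 : (k:ℝ) * ‖∑ x ∈ S', x‖ ≤ 2 * β * S.card * (m:ℝ) := by
        have h5 : ((m-1).choose (k-1) : ℝ) * ((k:ℝ) * ‖∑ x ∈ S', x‖)
            ≤ ((m-1).choose (k-1) : ℝ) * (2 * β * S.card * (m:ℝ)) := by
          calc ((m-1).choose (k-1) : ℝ) * ((k:ℝ) * ‖∑ x ∈ S', x‖)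
              = (k:ℝ) * (((m-1).choose (k-1) : ℝ) * ‖∑ x ∈ S', x‖) := by ring
            _ = (k:ℝ) * ‖∑ B ∈ S'.powersetCard k, ∑ x ∈ B, x‖ := by rw [E1]
            _ ≤ (k:ℝ) * ((m.choose k : ℝ) * (2 * β * S.card)) :=
                mul_le_mul_of_nonneg_left hbound hk0
            _ = ((m.choose k : ℝ) * (k:ℝ)) * (2 * β * S.card) := by ring
            _ = ((m:ℝ) * ((m-1).choose (k-1) : ℝ)) * (2 * β * S.card) := by rw [← E3]
            _ = ((m-1).choose (k-1) : ℝ) * (2 * β * S.card * (m:ℝ)) := by ring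
        exact le_of_mul_le_mul_left h5 hN
      have hXk := mul_le_mul_of_nonneg_left hklb hXnn
      refine le_of_mul_le_mul_right ?_ hc0
      linarith [hXk, s1]
  have hnorm : ‖fmean S'‖ = (m:ℝ)⁻¹ * ‖∑ x ∈ S', x‖ := by
    rw [fmean, norm_smul, Real.norm_eq_abs, abs_of_pos (inv_pos.2 hm0)]
  have hFm : ‖fmean S'‖ * (m:ℝ) = ‖∑ x ∈ S', x‖ := by
    rw [hnorm]; field_simp
  rw [le_div_iff₀ hα0]
  refine le_of_mul_le_mul_right ?_ hm0
  calc (‖fmean S'‖ * α) * (m:ℝ) = (‖fmean S'‖ * (m:ℝ)) * α := by ring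
    _ = ‖∑ x ∈ S', x‖ * α := by rw [hFm]
    _ ≤ 4 * β * (m:ℝ) := hX
end

section
/- Let S be a finite multiset of real numbers, let α ∈ (0,1), and let C ≥ 1. Suppose that at least 0.5·|S| of the elements of S are equal to 0 and at least 2α·|S| of the elements of S have absolute value at least C/√α − 1/2. Then the variance of S, which equals (1/(2|S|²))·∑_{x∈S}∑_{y∈S}(x−y)², is at least 0.25·C². -/
open scoped BigOperators

/-- The mean of a finite multiset of real numbers. -/
noncomputable def msMean (S : Multiset ℝ) : ℝ := (Multiset.card S : ℝ)⁻¹ * S.sum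

/-- The variance of a finite multiset of real numbers. -/
noncomputable def msVar (S : Multiset ℝ) : ℝ :=
  (Multiset.card S : ℝ)⁻¹ * (S.map fun x => (x - msMean S) ^ 2).sum

/-- sum of a quadratic over a multiset -/
lemma quad_sum (M : Multiset ℝ) (a b c : ℝ) :
    (M.map fun x => a * x ^ 2 + b * x + c).sum
      = a * (M.map fun x => x ^ 2).sum + b * M.sum + c * (Multiset.card M : ℝ) := by
  induction M using Multiset.induction with
  | empty => simp
  | cons x s ih =>
      simp only [Multiset.map_cons, Multiset.sum_cons, ih, Multiset.card_cons]
      push_cast; ring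

set_option maxHeartbeats 1600000 in
/-- Variance lower bound from two separated groups of points.
If a nonempty finite multiset `S` of reals has at least `0.5 |S|` elements equal to `0` and at
least `2α|S|` elements of absolute value at least `C/√α − 1/2` (with `C ≥ 1`, `0 < α < 1`), then
its variance — which equals `(1/(2|S|²)) ∑_{x∈S} ∑_{y∈S} (x−y)²` — is at least `0.25 C²`. -/
theorem variance_lower_bound (S : Multiset ℝ) (α C : ℝ)
    (hα0 : 0 < α) (hα1 : α < 1) (hC : 1 ≤ C) (hS : S ≠ 0)
    (hzero : 0.5 * (Multiset.card S : ℝ) ≤ (S.count 0 : ℝ))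
    (hbig : 2 * α * (Multiset.card S : ℝ) ≤
      ((Multiset.card (S.filter fun x => C / Real.sqrt α - 1 / 2 ≤ |x|)) : ℝ)) :
    msVar S = (2 * (Multiset.card S : ℝ) ^ 2)⁻¹ *
        (S.map fun x => (S.map fun y => (x - y) ^ 2).sum).sum ∧
    0.25 * C ^ 2 ≤ msVar S := by
  set n : ℝ := (Multiset.card S : ℝ) with hn
  have hnpos : 0 < n := by
    have : 0 < Multiset.card S := Multiset.card_pos.mpr hS
    rw [hn]; exact_mod_cast this
  have hn0 : n ≠ 0 := ne_of_gt hnpos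
  set Q : ℝ := (S.map fun x => x ^ 2).sum with hQ
  set Sg : ℝ := S.sum with hSg
  -- inner sums
  have hinner : ∀ x : ℝ, (S.map fun y => (x - y) ^ 2).sum = Q - 2 * x * Sg + x ^ 2 * n := by
    intro x
    have h1 : (S.map fun y => (x - y) ^ 2) = S.map fun y => 1 * y ^ 2 + (-2 * x) * y + x ^ 2 := by
      congr 1; funext y; ring
    rw [h1, quad_sum]; ring
  have houter : (S.map fun x => (S.map fun y => (x - y) ^ 2).sum).sum = 2 * n * Q - 2 * Sg ^ 2 := by
    have h1 : (S.map fun x => (S.map fun y => (x - y) ^ 2).sum)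
        = S.map fun x => n * x ^ 2 + (-2 * Sg) * x + Q := by
      congr 1; funext x; rw [hinner x]; ring
    rw [h1, quad_sum]; ring
  have hvar : msVar S = Q / n - (Sg / n) ^ 2 := by
    have h1 : (S.map fun x => (x - msMean S) ^ 2)
        = S.map fun x => 1 * x ^ 2 + (-2 * msMean S) * x + (msMean S) ^ 2 := by
      congr 1; funext x; ring
    rw [msVar, h1, quad_sum, msMean]
    field_simp
    rw [← hn, ← hQ, ← hSg]; field_simp; ring
  have hid : msVar S = (2 * n ^ 2)⁻¹ *
      (S.map fun x => (S.map fun y => (x - y) ^ 2).sum).sum := by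
    rw [houter, hvar]
    field_simp
  refine ⟨hid, ?_⟩
  -- lower bound
  set t : ℝ := C / Real.sqrt α - 1 / 2 with htdef
  have hsq0 : 0 < Real.sqrt α := Real.sqrt_pos.mpr hα0
  have hsq1 : Real.sqrt α < 1 := by
    rw [show (1 : ℝ) = Real.sqrt 1 by simp]
    exact Real.sqrt_lt_sqrt (le_of_lt hα0) hα1
  have ht : 1 / 2 < t := by
    have : 1 < C / Real.sqrt α := by
      rw [lt_div_iff₀ hsq0]
      nlinarith
    simp only [htdef]; linarith
  have htpos : 0 < t := lt_trans one_half_pos ht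
  -- the two subsets
  set S0 := S.filter (fun x => x = 0) with hS0
  set Sb := S.filter (fun x => t ≤ |x|) with hSb
  have hc0 : (S.count 0 : ℝ) = (Multiset.card S0 : ℝ) := by
    rw [hS0, Multiset.count_eq_card_filter_eq]
    congr 1
    apply Multiset.card_eq_card_of_rel
    rw [Multiset.rel_eq]
    congr 1
    funext x
    simp [eq_comm]
  set c0 : ℝ := (Multiset.card S0 : ℝ) with hc0'
  set cb : ℝ := (Multiset.card Sb : ℝ) with hcb'
  have hc0ge : 0.5 * n ≤ c0 := by rw [← hc0]; exact hzero
  have hcbge : 2 * α * n ≤ cb := hbig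
  -- S0 + Sb ≤ S
  have hdisj : S0 + Sb ≤ S := by
    have h1 : Sb ≤ S.filter (fun x => ¬ x = 0) := by
      apply Multiset.monotone_filter_right
      intro x hx h0
      rw [h0] at hx
      simp at hx
      linarith
    calc S0 + Sb ≤ S0 + S.filter (fun x => ¬ x = 0) := add_le_add_right h1 _
      _ = S := Multiset.filter_add_not _ S
  set g : ℝ → ℝ := fun x => (S.map fun y => (x - y) ^ 2).sum with hg
  clear_value n Q Sg t c0 cb g
  have hgnonneg : ∀ x, 0 ≤ g x := by
    intro x
    simp only [hg]
    apply Multiset.sum_nonneg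
    intro z hz
    obtain ⟨y, _, rfl⟩ := Multiset.mem_map.mp hz
    positivity
  -- bound g on each piece
  have hsub : ∀ (M : Multiset ℝ) (x b : ℝ), M ≤ S → (∀ y ∈ M, b ≤ (x - y) ^ 2) → 0 ≤ b →
      (Multiset.card M : ℝ) * b ≤ g x := by
    intro M x b hM hb hb0
    obtain ⟨u, rfl⟩ := Multiset.le_iff_exists_add.mp hM
    rw [hg]
    simp only [Multiset.map_add, Multiset.sum_add]
    have h1 : (Multiset.card M : ℝ) * b ≤ (M.map fun y => (x - y) ^ 2).sum := by
      have := Multiset.card_nsmul_le_sum (s := M.map fun y => (x - y) ^ 2)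
        (fun z hz => by obtain ⟨y, hy, rfl⟩ := Multiset.mem_map.mp hz; exact hb y hy)
      rw [Multiset.card_map, nsmul_eq_mul] at this
      exact this
    have h2 : 0 ≤ (u.map fun y => (x - y) ^ 2).sum := by
      apply Multiset.sum_nonneg
      intro z hz
      obtain ⟨y, _, rfl⟩ := Multiset.mem_map.mp hz
      positivity
    linarith
  have ht2 : (0:ℝ) ≤ t ^ 2 := by positivity
  have hg0 : ∀ x ∈ S0, cb * t ^ 2 ≤ g x := by
    intro x hx
    have hx0 : x = 0 := (Multiset.mem_filter.mp hx).2
    have := hsub Sb x (t ^ 2) (le_trans (Multiset.le_add_left _ _) hdisj) ?_ ht2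
    · rw [hcb']; exact this
    · intro y hy
      have hy' : t ≤ |y| := (Multiset.mem_filter.mp hy).2
      have : t ^ 2 ≤ |y| ^ 2 := by nlinarith [abs_nonneg y]
      rw [hx0]
      calc t ^ 2 ≤ |y| ^ 2 := this
        _ = (0 - y) ^ 2 := by rw [sq_abs]; ring
  have hgb : ∀ x ∈ Sb, c0 * t ^ 2 ≤ g x := by
    intro x hx
    have hx' : t ≤ |x| := (Multiset.mem_filter.mp hx).2
    have := hsub S0 x (t ^ 2) (le_trans (Multiset.le_add_right _ _) hdisj) ?_ ht2
    · rw [hc0']; exact this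
    · intro y hy
      have hy0 : y = 0 := (Multiset.mem_filter.mp hy).2
      have : t ^ 2 ≤ |x| ^ 2 := by nlinarith [abs_nonneg x]
      rw [hy0]
      calc t ^ 2 ≤ |x| ^ 2 := this
        _ = (x - 0) ^ 2 := by rw [sq_abs]; ring
  -- total sum bound
  have hT : 2 * c0 * cb * t ^ 2 ≤ (S.map g).sum := by
    obtain ⟨u, hu⟩ := Multiset.le_iff_exists_add.mp hdisj
    rw [hu]
    simp only [Multiset.map_add, Multiset.sum_add]
    have h1 : c0 * (cb * t ^ 2) ≤ (S0.map g).sum := by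
      have := Multiset.card_nsmul_le_sum (s := S0.map g)
        (fun z hz => by obtain ⟨x, hx, rfl⟩ := Multiset.mem_map.mp hz; exact hg0 x hx)
      rw [Multiset.card_map, nsmul_eq_mul] at this
      rw [hc0']; exact this
    have h2 : cb * (c0 * t ^ 2) ≤ (Sb.map g).sum := by
      have := Multiset.card_nsmul_le_sum (s := Sb.map g)
        (fun z hz => by obtain ⟨x, hx, rfl⟩ := Multiset.mem_map.mp hz; exact hgb x hx)
      rw [Multiset.card_map, nsmul_eq_mul] at this
      rw [hcb']; exact this
    have h3 : 0 ≤ (u.map g).sum := Multiset.sum_nonneg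
      (fun z hz => by obtain ⟨x, _, rfl⟩ := Multiset.mem_map.mp hz; exact hgnonneg x)
    linarith
  -- put it together
  rw [hid]
  have hα2 : α = Real.sqrt α ^ 2 := (Real.sq_sqrt (le_of_lt hα0)).symm
  have hca : Real.sqrt α * (C / Real.sqrt α) = C := by
    rw [mul_comm]; exact div_mul_cancel₀ C (ne_of_gt hsq0)
  have hst : Real.sqrt α * t = C - Real.sqrt α / 2 := by
    rw [htdef, mul_sub, hca]; ring
  have hkey : C ^ 2 ≤ 4 * α * t ^ 2 := by
    have h4 : 4 * α * t ^ 2 = (2 * (Real.sqrt α * t)) ^ 2 := by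
      rw [show (2 * (Real.sqrt α * t)) ^ 2 = 4 * (Real.sqrt α ^ 2) * t ^ 2 by ring, ← hα2]
    rw [h4, hst]
    nlinarith [mul_nonneg (by linarith : (0:ℝ) ≤ 3 * C - Real.sqrt α)
      (by linarith : (0:ℝ) ≤ C - Real.sqrt α)]
  have hTbig : 0.5 * C ^ 2 * n ^ 2 ≤ (S.map g).sum := by
    have h1 : 2 * (0.5 * n) * (2 * α * n) * t ^ 2 ≤ 2 * c0 * cb * t ^ 2 := by
      have hc0pos : 0 ≤ 0.5 * n := by linarith
      have hcbpos : 0 ≤ 2 * α * n := by positivity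
      nlinarith [mul_nonneg (mul_nonneg (by linarith : (0:ℝ) ≤ c0 - 0.5 * n) (by linarith : (0:ℝ) ≤ cb)) ht2,
        mul_nonneg (mul_nonneg hc0pos (by linarith : (0:ℝ) ≤ cb - 2 * α * n)) ht2]
    have h2 : 0.5 * C ^ 2 * n ^ 2 ≤ 2 * (0.5 * n) * (2 * α * n) * t ^ 2 := by
      have : 2 * (0.5 * n) * (2 * α * n) * t ^ 2 = (4 * α * t ^ 2) * (0.5 * n ^ 2) := by ring
      rw [this]
      nlinarith [mul_nonneg (by linarith : (0:ℝ) ≤ 4 * α * t ^ 2 - C ^ 2) (by positivity : (0:ℝ) ≤ 0.5 * n ^ 2)]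
    linarith
  have hpos : (0:ℝ) < (2 * n ^ 2)⁻¹ := by positivity
  calc 0.25 * C ^ 2 = (2 * n ^ 2)⁻¹ * (0.5 * C ^ 2 * n ^ 2) := by field_simp; ring
    _ ≤ _ := by
        apply mul_le_mul_of_nonneg_left _ (le_of_lt hpos)
        exact hTbig
end
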